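/- arXiv:2311.14219 — 6 statements merged into one kernel-verified Lean document; each statement's English description precedes it below -/
import Mathlib

section
/- Let X be a measurable space, u a capacity on X, and f, g : X → ℝ bounded measurable functions. If f and g are comonotonic, then I^u(f + g) = I^u(f) + I^u(g); that is, the Choquet integral with respect to u is comonotonically additive. -/
open MeasureTheory

/-- A capacity on a measurable space `X`. -/
def IsCapacity {X : Type*} [MeasurableSpace X] (u : Set X → ℝ) : Prop :=
  u ∅ = 0 ∧ u Set.univ = 1 ∧
    ∀ A B : Set X, MeasurableSet A → MeasurableSet B → A ⊆ B → u A ≤ u B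

/-- The Choquet integral of `f` with respect to `u`. -/
noncomputable def choquet {X : Type*} (u : Set X → ℝ) (f : X → ℝ) : ℝ :=
  (∫ r in Set.Ioi (0 : ℝ), u {x | f x ≥ r}) +
    ∫ r in Set.Iio (0 : ℝ), (u {x | f x ≥ r} - 1)

/-- Two real-valued functions are comonotonic. -/
def Comonotonic {X : Type*} (f g : X → ℝ) : Prop :=
  ∀ x y, (f x - f y) * (g x - g y) ≥ 0

open Set Filter Topology

section Aux

/-- Generalized inverse of `A` adapted to the window `[-K, K]`. -/
noncomputable def rho (A : ℝ → ℝ) (K : ℝ) (s : ℝ) : ℝ :=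
  sInf ({r | s ≤ A r ∧ -K ≤ r} ∪ {K})

lemma rho_mem_lb {A : ℝ → ℝ} {K : ℝ} (hK : 0 ≤ K) (s : ℝ) :
    BddBelow ({r | s ≤ A r ∧ -K ≤ r} ∪ {K}) := by
  refine ⟨-K, fun r hr => ?_⟩
  rcases hr with ⟨_, h2⟩ | h
  · exact h2
  · simp only [mem_singleton_iff] at h; rw [h]; linarith

lemma rho_mem {A : ℝ → ℝ} (hcont : Continuous A) {K : ℝ} (hK : 0 ≤ K) (s : ℝ) :
    rho A K s ∈ ({r | s ≤ A r ∧ -K ≤ r} ∪ {K}) := by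
  have hcl : IsClosed ({r | s ≤ A r ∧ -K ≤ r} ∪ {K}) := by
    have h : {r | s ≤ A r ∧ -K ≤ r} = {r | s ≤ A r} ∩ Ici (-K) := rfl
    rw [h]
    exact ((isClosed_le continuous_const hcont).inter isClosed_Ici).union isClosed_singleton
  exact hcl.csInf_mem ⟨K, Or.inr rfl⟩ (rho_mem_lb hK s)

lemma le_A_rho {A : ℝ → ℝ} (hcont : Continuous A) {K : ℝ} (hK : 0 ≤ K) {s : ℝ}
    (hs2 : s ≤ A K) : s ≤ A (rho A K s) := by
  rcases rho_mem hcont hK s with ⟨h1, _⟩ | h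
  · exact h1
  · simp only [mem_singleton_iff] at h; rw [h]; exact hs2

lemma rho_le_iff {A : ℝ → ℝ} (hmono : Monotone A) (hcont : Continuous A) {K : ℝ} (hK : 0 ≤ K)
    (hc1 : ∀ t, t ≤ -K → A t = A (-K)) {s : ℝ} (hs1 : A (-K) < s) (hs2 : s ≤ A K) (q : ℝ) :
    rho A K s ≤ q ↔ s ≤ A q := by
  constructor
  · intro h
    exact le_trans (le_A_rho hcont hK hs2) (hmono h)
  · intro h
    rcases le_total (-K) q with hq | hq
    · exact csInf_le (rho_mem_lb hK s) (Or.inl ⟨h, hq⟩)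
    · exact absurd (h.trans_lt (by rw [hc1 q hq]; exact hs1)) (lt_irrefl s)

lemma monotone_rho (A : ℝ → ℝ) {K : ℝ} (hK : 0 ≤ K) :
    Monotone (rho A K) := by
  intro s t hst
  refine le_csInf ⟨K, Or.inr rfl⟩ fun r hr => ?_
  rcases hr with ⟨h1, h2⟩ | h
  · exact csInf_le (rho_mem_lb hK s) (Or.inl ⟨hst.trans h1, h2⟩)
  · simp only [mem_singleton_iff] at h
    rw [h]
    exact csInf_le (rho_mem_lb hK s) (Or.inr rfl)

lemma integral_rho (A : StieltjesFunction ℝ) {K : ℝ} (hK : 0 ≤ K) (hcont : Continuous A)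
    (hc1 : ∀ t, t ≤ -K → A t = A (-K)) (hc2 : ∀ t, K ≤ t → A t = A K)
    (φ : ℝ → ℝ) (hφm : Measurable φ) :
    ∫ s in Set.Ioc (A (-K)) (A K), φ (rho (A : ℝ → ℝ) K s) = ∫ r, φ r ∂A.measure := by
  have hmono := A.mono
  have hρmeas : Measurable (rho (A : ℝ → ℝ) K) := (monotone_rho _ hK).measurable
  have hbound : ∀ p, A (-K) ≤ A p ∧ A p ≤ A K := fun p => by
    constructor
    · rcases le_total p (-K) with h | h
      · rw [hc1 p h]
      · exact hmono h
    · rcases le_total K p with h | h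
      · rw [hc2 p h]
      · exact hmono h
  have hmap : Measure.map (rho (A : ℝ → ℝ) K) (volume.restrict (Set.Ioc (A (-K)) (A K)))
      = A.measure := by
    refine Measure.ext_of_Ioc' _ _ (fun p q hpq => ?_) (fun p q hpq => ?_)
    · rw [Measure.map_apply hρmeas measurableSet_Ioc,
        Measure.restrict_apply (hρmeas measurableSet_Ioc)]
      exact ((measure_mono Set.inter_subset_right).trans_lt
        (by rw [Real.volume_Ioc]; exact ENNReal.ofReal_lt_top)).ne
    · rw [Measure.map_apply hρmeas measurableSet_Ioc,
        Measure.restrict_apply (hρmeas measurableSet_Ioc), A.measure_Ioc]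
      have hset : rho (A : ℝ → ℝ) K ⁻¹' Set.Ioc p q ∩ Set.Ioc (A (-K)) (A K)
          = Set.Ioc (A p) (A q) := by
        ext s
        simp only [mem_inter_iff, mem_preimage, mem_Ioc]
        constructor
        · rintro ⟨⟨hp, hq⟩, hs1, hs2⟩
          have hiff := rho_le_iff hmono hcont hK hc1 hs1 hs2
          refine ⟨not_le.1 fun h => hp.not_ge ((hiff p).2 h), (hiff q).1 hq⟩
        · rintro ⟨hp, hq⟩
          have hs1 : A (-K) < s := lt_of_le_of_lt (hbound p).1 hp
          have hs2 : s ≤ A K := hq.trans (hbound q).2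
          have hiff := rho_le_iff hmono hcont hK hc1 hs1 hs2
          exact ⟨⟨not_le.1 fun h => hp.not_ge ((hiff p).1 h), (hiff q).2 hq⟩, hs1, hs2⟩
      rw [hset, Real.volume_Ioc]
  calc ∫ s in Set.Ioc (A (-K)) (A K), φ (rho (A : ℝ → ℝ) K s)
      = ∫ r, φ r ∂(Measure.map (rho (A : ℝ → ℝ) K)
          (volume.restrict (Set.Ioc (A (-K)) (A K)))) := by
        rw [integral_map hρmeas.aemeasurable hφm.aestronglyMeasurable]
    _ = ∫ r, φ r ∂A.measure := by rw [hmap]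

set_option maxHeartbeats 2000000 in
lemma clamp_diff {K p q : ℝ} (hK : -K ≤ K) (hpq : p ≤ q) :
    min K (max q (-K)) - min K (max p (-K)) = max (min q K - max p (-K)) 0 := by
  rcases le_total q (-K) with h1 | h1 <;> rcases le_total K p with h2 | h2 <;>
    rcases le_total q K with h3 | h3 <;> rcases le_total p (-K) with h4 | h4 <;>
    rw [min_def, min_def, min_def, max_def, max_def, max_def] <;> split_ifs <;> linarith

lemma stieltjes_add_eq (A B : StieltjesFunction ℝ) {K : ℝ} (hK : 0 ≤ K)
    (hAB : ∀ t, A t + B t = min K (max t (-K))) :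
    A.measure + B.measure = volume.restrict (Set.Ioc (-K) K) := by
  refine Measure.ext_of_Ioc' _ _ (fun p q hpq => ?_) (fun p q hpq => ?_)
  · simp only [Measure.add_apply, A.measure_Ioc, B.measure_Ioc]
    exact ENNReal.add_ne_top.2 ⟨ENNReal.ofReal_ne_top, ENNReal.ofReal_ne_top⟩
  · rw [Measure.add_apply, A.measure_Ioc, B.measure_Ioc,
      Measure.restrict_apply measurableSet_Ioc, Set.Ioc_inter_Ioc, Real.volume_Ioc]
    rw [← ENNReal.ofReal_add (by linarith [A.mono hpq.le]) (by linarith [B.mono hpq.le])]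
    have key : A q - A p + (B q - B p) = max (min q K - max p (-K)) 0 := by
      have h1 := hAB q; have h2 := hAB p
      have := clamp_diff (by linarith : -K ≤ K) hpq.le
      linarith
    rw [key]
    rcases le_total (min q K - max p (-K)) 0 with h | h
    · rw [max_eq_right h, ENNReal.ofReal_zero, eq_comm, ENNReal.ofReal_eq_zero]
      linarith
    · rw [max_eq_left h]

lemma choquet_eq_setIntegral {X : Type*} [MeasurableSpace X] (u : Set X → ℝ) (f : X → ℝ)
    (c d : ℝ) (hcd : c ≤ d)
    (hmono : Antitone (fun s => u {x | f x ≥ s}))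
    (h0 : ∀ s : ℝ, 0 ≤ u {x | f x ≥ s}) (h1 : ∀ s : ℝ, u {x | f x ≥ s} ≤ 1)
    (hc : ∀ s : ℝ, s ≤ c → u {x | f x ≥ s} = 1)
    (hd : ∀ s : ℝ, d < s → u {x | f x ≥ s} = 0) :
    choquet u f = c + ∫ s in Set.Ioc c d, u {x | f x ≥ s} := by
  set φ : ℝ → ℝ := fun s => u {x | f x ≥ s} with hφdef
  set L := min c 0 with hLdef
  set R := max d 0 with hRdef
  have hL0 : L ≤ 0 := min_le_right _ _
  have hLc : L ≤ c := min_le_left _ _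
  have h0R : (0:ℝ) ≤ R := le_max_right _ _
  have hdR : d ≤ R := le_max_left _ _
  have hmeas : Measurable φ := hmono.measurable
  have hb : ∀ s, |φ s| ≤ 1 := fun s => abs_le.2 ⟨by linarith [h0 s], h1 s⟩
  have hint : ∀ p q : ℝ, IntegrableOn φ (Set.Ioc p q) := fun p q => by
    have h1' : IntegrableOn (fun _ : ℝ => (1:ℝ)) (Set.Ioc p q) :=
      integrableOn_const measure_Ioc_lt_top.ne
    exact h1'.mono' hmeas.aestronglyMeasurable (ae_of_all _ hb)
  have hzero_top : EqOn φ 0 (Set.Ioi R) := fun s hs => hd s (lt_of_le_of_lt hdR hs)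
  have hIoiR : ∫ s in Set.Ioi R, φ s = 0 := by
    rw [setIntegral_congr_fun measurableSet_Ioi hzero_top]; simp
  have hintIoiR : IntegrableOn φ (Set.Ioi R) :=
    (integrableOn_zero).congr_fun (fun s hs => (hzero_top hs).symm) measurableSet_Ioi
  have hpos : ∫ s in Set.Ioi (0:ℝ), φ s = ∫ s in Set.Ioc 0 R, φ s := by
    rw [← Set.Ioc_union_Ioi_eq_Ioi h0R,
      setIntegral_union Set.Ioc_disjoint_Ioi_same measurableSet_Ioi (hint 0 R) hintIoiR,
      hIoiR, add_zero]
  have hone : EqOn (fun s => φ s - 1) 0 (Set.Iic L) := fun s hs => by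
    have h := hc s (le_trans hs hLc)
    simp only [Pi.zero_apply, hφdef]
    rw [h]; ring
  have hIicL : ∫ s in Set.Iic L, (φ s - 1) = 0 := by
    rw [setIntegral_congr_fun measurableSet_Iic hone]; simp
  have hintIic : IntegrableOn (fun s => φ s - 1) (Set.Iic L) :=
    integrableOn_zero.congr_fun (fun s hs => (hone hs).symm) measurableSet_Iic
  have hint1 : IntegrableOn (fun _ : ℝ => (1:ℝ)) (Set.Ioc L 0) :=
    integrableOn_const measure_Ioc_lt_top.ne
  have hintIoc : IntegrableOn (fun s => φ s - 1) (Set.Ioc L 0) := (hint L 0).sub hint1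
  have hneg : ∫ s in Set.Iio (0:ℝ), (φ s - 1) = ∫ s in Set.Ioc L 0, (φ s - 1) := by
    rw [setIntegral_congr_set Iio_ae_eq_Iic, ← Set.Iic_union_Ioc_eq_Iic hL0,
      setIntegral_union (Set.Iic_disjoint_Ioc le_rfl) measurableSet_Ioc hintIic hintIoc,
      hIicL, zero_add]
  have hconst : ∫ _s in Set.Ioc L 0, (1:ℝ) = -L := by
    rw [setIntegral_const, Real.volume_real_Ioc, smul_eq_mul, mul_one,
      max_eq_left (by linarith)]
    ring
  have hsplit1 : ∫ s in Set.Ioc L 0, (φ s - 1) = (∫ s in Set.Ioc L 0, φ s) + L := by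
    rw [integral_sub (hint L 0) hint1, hconst]; ring
  have hLR : ∫ s in Set.Ioc L R, φ s = (∫ s in Set.Ioc L 0, φ s) + ∫ s in Set.Ioc 0 R, φ s := by
    rw [← Set.Ioc_union_Ioc_eq_Ioc hL0 h0R,
      setIntegral_union (Set.Ioc_disjoint_Ioc_of_le le_rfl) measurableSet_Ioc (hint L 0) (hint 0 R)]
  have hLc' : ∫ s in Set.Ioc L c, φ s = c - L := by
    have h : EqOn φ (fun _ => (1:ℝ)) (Set.Ioc L c) := fun s hs => hc s hs.2
    rw [setIntegral_congr_fun measurableSet_Ioc h, setIntegral_const, Real.volume_real_Ioc,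
      smul_eq_mul, mul_one, max_eq_left (by linarith)]
  have hdR' : ∫ s in Set.Ioc d R, φ s = 0 := by
    have h : EqOn φ 0 (Set.Ioc d R) := fun s hs => hd s hs.1
    rw [setIntegral_congr_fun measurableSet_Ioc h]; simp
  have hLR2 : ∫ s in Set.Ioc L R, φ s = (c - L) + ∫ s in Set.Ioc c d, φ s := by
    rw [← Set.Ioc_union_Ioc_eq_Ioc hLc (hcd.trans hdR),
      setIntegral_union (Set.Ioc_disjoint_Ioc_of_le le_rfl) measurableSet_Ioc (hint L c) (hint c R),
      hLc', ← Set.Ioc_union_Ioc_eq_Ioc hcd hdR,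
      setIntegral_union (Set.Ioc_disjoint_Ioc_of_le le_rfl) measurableSet_Ioc (hint c d) (hint d R),
      hdR', add_zero]
  have hch : choquet u f = (∫ s in Set.Ioi (0:ℝ), φ s) + ∫ s in Set.Iio (0:ℝ), (φ s - 1) := rfl
  rw [hch, hpos, hneg, hsplit1]
  have := hLR.symm.trans hLR2
  linarith

end Aux

/-- The Choquet integral is comonotonically additive. -/
theorem choquet_comonotonic_additive {X : Type*} [MeasurableSpace X] (u : Set X → ℝ)
    (hu : IsCapacity u) (f g : X → ℝ) (hf : Measurable f) (hg : Measurable g)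
    (hfb : ∃ M, ∀ x, |f x| ≤ M) (hgb : ∃ M, ∀ x, |g x| ≤ M)
    (hcomon : Comonotonic f g) :
    choquet u (f + g) = choquet u f + choquet u g := by
  obtain ⟨u0, u1, umono⟩ := hu
  obtain ⟨Mf, hMf⟩ := hfb
  obtain ⟨Mg, hMg⟩ := hgb
  -- X is nonempty
  have hX : Nonempty X := by
    by_contra hX
    rw [not_nonempty_iff] at hX
    have he : (Set.univ : Set X) = ∅ := Set.univ_eq_empty_iff.2 hX
    rw [he, u0] at u1; norm_num at u1
  set h : X → ℝ := f + g with hhdef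
  have hh : Measurable h := hf.add hg
  have hMf0 : 0 ≤ Mf := le_trans (abs_nonneg _) (hMf hX.some)
  have hMg0 : 0 ≤ Mg := le_trans (abs_nonneg _) (hMg hX.some)
  set K : ℝ := Mf + Mg + 1 with hKdef
  have hK : 0 ≤ K := by linarith
  have hhb : ∀ x, |h x| ≤ Mf + Mg := fun x => by
    have h1 := abs_le.1 (hMf x); have h2 := abs_le.1 (hMg x)
    have : h x = f x + g x := rfl
    rw [this, abs_le]; constructor <;> [linarith; linarith]
  -- comonotonicity facts
  have key : ∀ x y, h y ≤ h x → f y ≤ f x ∧ f x - f y ≤ h x - h y := by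
    intro x y hxy
    have hcm := hcomon x y
    have hsum : (f x - f y) + (g x - g y) = h x - h y := by
      have : h x = f x + g x := rfl
      have : h y = f y + g y := rfl
      show (f x - f y) + (g x - g y) = (f x + g x) - (f y + g y)
      ring
    constructor <;> nlinarith [hcm]
  -- the nondecreasing 1-Lipschitz reparametrization
  set a : ℝ → ℝ := fun t => ⨅ y, (f y + max (t - h y) 0) with hadef
  have hbdd : ∀ t, BddBelow (Set.range fun y => f y + max (t - h y) 0) := fun t => by
    refine ⟨-Mf, ?_⟩
    rintro r ⟨y, rfl⟩
    have h1 := abs_le.1 (hMf y)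
    have h2 := le_max_right (t - h y) 0
    simp only
    linarith
  have haf : ∀ x, a (h x) = f x := by
    intro x
    apply le_antisymm
    · refine (ciInf_le (hbdd _) x).trans ?_
      simp
    · refine le_ciInf fun y => ?_
      rcases le_total (h y) (h x) with hxy | hxy
      · have h1 := (key x y hxy).2
        have h2 := le_max_left (h x - h y) 0
        linarith
      · have h1 := (key y x hxy).1
        have h2 := le_max_right (h x - h y) 0
        linarith
  have hamono : Monotone a := by
    intro s t hst
    refine ciInf_mono (hbdd s) fun y => ?_
    have : max (s - h y) 0 ≤ max (t - h y) 0 := max_le_max (by linarith) le_rfl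
    linarith
  have halip : ∀ s t, s ≤ t → a t ≤ a s + (t - s) := by
    intro s t hst
    have hstep : ∀ y, a t - (t - s) ≤ f y + max (s - h y) 0 := fun y => by
      have h1 : a t ≤ f y + max (t - h y) 0 := ciInf_le (hbdd t) y
      have h2 : max (t - h y) 0 ≤ max (s - h y) 0 + (t - s) := by
        refine max_le ?_ ?_
        · have := le_max_left (s - h y) 0; linarith
        · have := le_max_right (s - h y) 0; linarith
      linarith
    have := le_ciInf hstep
    have ha : a t - (t - s) ≤ a s := this
    linarith
  have hacont : Continuous a := by
    have hlip : LipschitzWith 1 a := by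
      refine LipschitzWith.of_dist_le_mul fun s t => ?_
      rw [Real.dist_eq, Real.dist_eq, NNReal.coe_one, one_mul]
      rcases le_total s t with hst | hst
      · have h1 := hamono hst; have h2 := halip s t hst
        rw [abs_of_nonpos (by linarith), abs_of_nonpos (by linarith)]; linarith
      · have h1 := hamono hst; have h2 := halip t s hst
        rw [abs_of_nonneg (by linarith), abs_of_nonneg (by linarith)]; linarith
    exact hlip.continuous
  -- clamping to the window [-K, K]
  set clamp : ℝ → ℝ := fun t => min K (max t (-K)) with hclampdef
  have hclampmono : Monotone clamp := fun s t hst => by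
    show min K (max s (-K)) ≤ min K (max t (-K))
    exact min_le_min le_rfl (max_le_max hst le_rfl)
  have hclampcont : Continuous clamp := continuous_const.min (continuous_id.max continuous_const)
  have hclamp_id : ∀ t, |t| ≤ Mf + Mg → clamp t = t := fun t ht => by
    have h1 := abs_le.1 ht
    show min K (max t (-K)) = t
    rw [max_eq_left (by linarith), min_eq_right (by linarith)]
  have hclamp_bot : ∀ t, t ≤ -K → clamp t = -K := fun t ht => by
    show min K (max t (-K)) = -K
    rw [max_eq_right ht, min_eq_right (by linarith)]
  have hclamp_top : ∀ t, K ≤ t → clamp t = K := fun t ht => by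
    show min K (max t (-K)) = K
    rw [min_eq_left (le_max_of_le_left ht)]
  -- the Stieltjes functions A and B
  set A : StieltjesFunction ℝ :=
    ⟨fun t => a (clamp t), fun s t hst => hamono (hclampmono hst),
      fun x => (hacont.comp hclampcont).continuousWithinAt⟩ with hAdef
  have hBmono : Monotone fun t => clamp t - a (clamp t) := fun s t hst => by
    have h1 := hclampmono hst
    have h2 := halip (clamp s) (clamp t) h1
    simp only
    linarith
  set B : StieltjesFunction ℝ :=
    ⟨fun t => clamp t - a (clamp t), hBmono,
      fun x => (hclampcont.sub (hacont.comp hclampcont)).continuousWithinAt⟩ with hBdef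
  have hAfun : ∀ t, (A : ℝ → ℝ) t = a (clamp t) := fun t => rfl
  have hBfun : ∀ t, (B : ℝ → ℝ) t = clamp t - a (clamp t) := fun t => rfl
  have hAcont : Continuous (A : ℝ → ℝ) := hacont.comp hclampcont
  have hBcont : Continuous (B : ℝ → ℝ) := hclampcont.sub (hacont.comp hclampcont)
  have hc1A : ∀ t, t ≤ -K → (A : ℝ → ℝ) t = A (-K) := fun t ht => by
    rw [hAfun, hAfun, hclamp_bot t ht, hclamp_bot (-K) le_rfl]
  have hc2A : ∀ t, K ≤ t → (A : ℝ → ℝ) t = A K := fun t ht => by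
    rw [hAfun, hAfun, hclamp_top t ht, hclamp_top K le_rfl]
  have hc1B : ∀ t, t ≤ -K → (B : ℝ → ℝ) t = B (-K) := fun t ht => by
    rw [hBfun, hBfun, hclamp_bot t ht, hclamp_bot (-K) le_rfl]
  have hc2B : ∀ t, K ≤ t → (B : ℝ → ℝ) t = B K := fun t ht => by
    rw [hBfun, hBfun, hclamp_top t ht, hclamp_top K le_rfl]
  have hABsum : ∀ t, (A : ℝ → ℝ) t + B t = min K (max t (-K)) := fun t => by
    rw [hAfun, hBfun]; ring
  have hfA : ∀ x, f x = (A : ℝ → ℝ) (h x) := fun x => by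
    rw [hAfun, hclamp_id (h x) (hhb x), haf]
  have hgB : ∀ x, g x = (B : ℝ → ℝ) (h x) := fun x => by
    rw [hBfun, hclamp_id (h x) (hhb x), haf]
    have : h x = f x + g x := rfl
    rw [this]; ring
  -- the survival function of h
  set φ : ℝ → ℝ := fun r => u {x | h x ≥ r} with hφdef
  have hmset : ∀ (F : X → ℝ), Measurable F → ∀ r : ℝ, MeasurableSet {x | F x ≥ r} :=
    fun F hF r => hF measurableSet_Ici
  have hu0 : ∀ (F : X → ℝ), Measurable F → ∀ s : ℝ, 0 ≤ u {x | F x ≥ s} := fun F hF s => by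
    rw [← u0]
    exact umono _ _ MeasurableSet.empty (hmset F hF s) (Set.empty_subset _)
  have hu1 : ∀ (F : X → ℝ), Measurable F → ∀ s : ℝ, u {x | F x ≥ s} ≤ 1 := fun F hF s => by
    rw [← u1]
    exact umono _ _ (hmset F hF s) MeasurableSet.univ (Set.subset_univ _)
  have hanti : ∀ (F : X → ℝ), Measurable F → Antitone (fun s => u {x | F x ≥ s}) :=
    fun F hF s t hst =>
      umono _ _ (hmset F hF t) (hmset F hF s) (fun x hx => le_trans hst hx)
  have hφmeas : Measurable φ := (hanti h hh).measurable
  -- Choquet integral of h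
  have hch : choquet u h = -K + ∫ s in Set.Ioc (-K) K, φ s := by
    refine choquet_eq_setIntegral u h (-K) K (by linarith) (hanti h hh) (hu0 h hh) (hu1 h hh)
      (fun s hs => ?_) (fun s hs => ?_)
    · have he : {x | h x ≥ s} = Set.univ := by
        refine Set.eq_univ_of_forall fun x => ?_
        have := abs_le.1 (hhb x)
        show s ≤ h x
        linarith
      rw [he, u1]
    · have he : {x | h x ≥ s} = ∅ := by
        refine Set.eq_empty_iff_forall_notMem.2 fun x hx => ?_
        have := abs_le.1 (hhb x)
        have hx' : s ≤ h x := hx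
        linarith
      rw [he, u0]
  -- Choquet integral of f
  have hcf : choquet u f = A (-K) + ∫ s in Set.Ioc (A (-K)) (A K), u {x | f x ≥ s} := by
    refine choquet_eq_setIntegral u f (A (-K)) (A K) (A.mono (by linarith)) (hanti f hf)
      (hu0 f hf) (hu1 f hf) (fun s hs => ?_) (fun s hs => ?_)
    · have he : {x | f x ≥ s} = Set.univ := by
        refine Set.eq_univ_of_forall fun x => ?_
        show s ≤ f x
        rw [hfA x]
        refine hs.trans (A.mono ?_)
        have := abs_le.1 (hhb x)
        linarith
      rw [he, u1]
    · have he : {x | f x ≥ s} = ∅ := by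
        refine Set.eq_empty_iff_forall_notMem.2 fun x hx => ?_
        have hx' : s ≤ f x := hx
        rw [hfA x] at hx'
        have : (A : ℝ → ℝ) (h x) ≤ A K := by
          refine A.mono ?_
          have := abs_le.1 (hhb x)
          linarith
        linarith
      rw [he, u0]
  -- Choquet integral of g
  have hcg : choquet u g = B (-K) + ∫ s in Set.Ioc (B (-K)) (B K), u {x | g x ≥ s} := by
    refine choquet_eq_setIntegral u g (B (-K)) (B K) (B.mono (by linarith)) (hanti g hg)
      (hu0 g hg) (hu1 g hg) (fun s hs => ?_) (fun s hs => ?_)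
    · have he : {x | g x ≥ s} = Set.univ := by
        refine Set.eq_univ_of_forall fun x => ?_
        show s ≤ g x
        rw [hgB x]
        refine hs.trans (B.mono ?_)
        have := abs_le.1 (hhb x)
        linarith
      rw [he, u1]
    · have he : {x | g x ≥ s} = ∅ := by
        refine Set.eq_empty_iff_forall_notMem.2 fun x hx => ?_
        have hx' : s ≤ g x := hx
        rw [hgB x] at hx'
        have : (B : ℝ → ℝ) (h x) ≤ B K := by
          refine B.mono ?_
          have := abs_le.1 (hhb x)
          linarith
        linarith
      rw [he, u0]
  -- convert the f- and g-integrals to integrals against the Stieltjes measures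
  have hconvf : ∫ s in Set.Ioc (A (-K)) (A K), u {x | f x ≥ s} = ∫ r, φ r ∂A.measure := by
    rw [← integral_rho A hK hAcont hc1A hc2A φ hφmeas]
    refine setIntegral_congr_fun measurableSet_Ioc fun s hs => ?_
    have hsetf : {x | f x ≥ s} = {x | h x ≥ rho (A : ℝ → ℝ) K s} := by
      ext x
      have hiff := rho_le_iff A.mono hAcont hK hc1A hs.1 hs.2 (h x)
      simp only [Set.mem_setOf_eq, ge_iff_le]
      rw [hfA x]
      exact ⟨fun hh' => (hiff.2 hh'), fun hh' => hiff.1 hh'⟩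
    rw [hsetf]
  have hconvg : ∫ s in Set.Ioc (B (-K)) (B K), u {x | g x ≥ s} = ∫ r, φ r ∂B.measure := by
    rw [← integral_rho B hK hBcont hc1B hc2B φ hφmeas]
    refine setIntegral_congr_fun measurableSet_Ioc fun s hs => ?_
    have hsetg : {x | g x ≥ s} = {x | h x ≥ rho (B : ℝ → ℝ) K s} := by
      ext x
      have hiff := rho_le_iff B.mono hBcont hK hc1B hs.1 hs.2 (h x)
      simp only [Set.mem_setOf_eq, ge_iff_le]
      rw [hgB x]
      exact ⟨fun hh' => (hiff.2 hh'), fun hh' => hiff.1 hh'⟩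
    rw [hsetg]
  -- finiteness of the Stieltjes measures
  have htopA : Tendsto (A : ℝ → ℝ) atTop (𝓝 (A K)) :=
    tendsto_const_nhds.congr' ((eventually_ge_atTop K).mono fun t ht => (hc2A t ht).symm)
  have hbotA : Tendsto (A : ℝ → ℝ) atBot (𝓝 (A (-K))) :=
    tendsto_const_nhds.congr' ((eventually_le_atBot (-K)).mono fun t ht => (hc1A t ht).symm)
  have htopB : Tendsto (B : ℝ → ℝ) atTop (𝓝 (B K)) :=
    tendsto_const_nhds.congr' ((eventually_ge_atTop K).mono fun t ht => (hc2B t ht).symm)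
  have hbotB : Tendsto (B : ℝ → ℝ) atBot (𝓝 (B (-K))) :=
    tendsto_const_nhds.congr' ((eventually_le_atBot (-K)).mono fun t ht => (hc1B t ht).symm)
  haveI : IsFiniteMeasure A.measure := A.isFiniteMeasure hbotA htopA
  haveI : IsFiniteMeasure B.measure := B.isFiniteMeasure hbotB htopB
  have hφb : ∀ r, |φ r| ≤ 1 := fun r =>
    abs_le.2 ⟨by linarith [hu0 h hh r], hu1 h hh r⟩
  have hφintA : Integrable φ A.measure :=
    (integrable_const (1:ℝ)).mono' hφmeas.aestronglyMeasurable (ae_of_all _ hφb)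
  have hφintB : Integrable φ B.measure :=
    (integrable_const (1:ℝ)).mono' hφmeas.aestronglyMeasurable (ae_of_all _ hφb)
  -- the two Stieltjes measures add up to Lebesgue measure on (-K, K]
  have haddm : (∫ r, φ r ∂A.measure) + ∫ r, φ r ∂B.measure = ∫ s in Set.Ioc (-K) K, φ s := by
    rw [← integral_add_measure hφintA hφintB, stieltjes_add_eq A B hK hABsum]
  -- conclusion
  have hKsum : (A : ℝ → ℝ) (-K) + B (-K) = -K := by
    rw [hABsum (-K), max_self, min_eq_right (by linarith)]
  rw [hch, hcf, hcg, hconvf, hconvg]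
  linarith [haddm]
end

section
/- Let X be a measurable space and u a capacity on X that is additive, i.e. u(A ∪ B) = u(A) + u(B) for every pair of disjoint measurable subsets A, B of X. Then the Choquet integral with respect to u is linear: for all real numbers a, b and all bounded measurable functions f, g : X → ℝ, I^u(a·f + b·g) = a·I^u(f) + b·I^u(g). -/
open MeasureTheory

set_option linter.unusedSectionVars false
set_option maxHeartbeats 1000000

open Set intervalIntegral

namespace ChoquetAux
variable {X : Type*} [MeasurableSpace X]

/-- restricted level function -/
noncomputable def cut (u : Set X → ℝ) (A : Set X) (f : X → ℝ) (r : ℝ) : ℝ :=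
  u (A ∩ {x | f x ≥ r})

lemma meas_lev {f : X → ℝ} (hf : Measurable f) (r : ℝ) : MeasurableSet {x | f x ≥ r} :=
  measurableSet_le measurable_const hf

lemma cut_antitone {u : Set X → ℝ} (hm : ∀ A B : Set X, MeasurableSet A → MeasurableSet B → A ⊆ B → u A ≤ u B)
    {A : Set X} (hA : MeasurableSet A) {f : X → ℝ} (hf : Measurable f) :
    Antitone (cut u A f) := by
  intro r s hrs
  exact hm _ _ (hA.inter (meas_lev hf s)) (hA.inter (meas_lev hf r))
    (Set.inter_subset_inter_right _ fun x hx => le_trans hrs hx)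

lemma cut_ii {u : Set X → ℝ} (hm : ∀ A B : Set X, MeasurableSet A → MeasurableSet B → A ⊆ B → u A ≤ u B)
    {A : Set X} (hA : MeasurableSet A) {f : X → ℝ} (hf : Measurable f) (a b : ℝ) :
    IntervalIntegrable (cut u A f) volume a b :=
  (cut_antitone hm hA hf).intervalIntegrable

lemma cut_low {u : Set X → ℝ} {A : Set X} {f : X → ℝ} {M r : ℝ}
    (hfM : ∀ x, |f x| ≤ M) (hr : r ≤ -M) : cut u A f r = u A := by
  unfold cut
  congr 1
  have : {x | f x ≥ r} = Set.univ := by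
    ext x; simp only [Set.mem_setOf_eq, Set.mem_univ, iff_true, ge_iff_le]
    have := (abs_le.1 (hfM x)).1; linarith
  rw [this, Set.inter_univ]

lemma cut_high {u : Set X → ℝ} (h0 : u ∅ = 0) {A : Set X} {f : X → ℝ} {M r : ℝ}
    (hfM : ∀ x, |f x| ≤ M) (hr : M < r) : cut u A f r = 0 := by
  unfold cut
  have : A ∩ {x | f x ≥ r} = ∅ := by
    ext x; simp only [Set.mem_inter_iff, Set.mem_setOf_eq, Set.mem_empty_iff_false, iff_false,
      not_and, ge_iff_le]
    intro _ hx
    have := (abs_le.1 (hfM x)).2; linarith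
  rw [this, h0]

/-- plateau integral formula -/
lemma plateau {u : Set X → ℝ} (h0 : u ∅ = 0)
    (hm : ∀ A B : Set X, MeasurableSet A → MeasurableSet B → A ⊆ B → u A ≤ u B)
    {A : Set X} (hA : MeasurableSet A) {f : X → ℝ} (hf : Measurable f) {M : ℝ}
    (hfM : ∀ x, |f x| ≤ M) {a b : ℝ} (hM : 0 ≤ M) (ha : a ≤ -M) (hb : M ≤ b) :
    ∫ r in a..b, cut u A f r = (∫ r in (-M)..M, cut u A f r) + (-M - a) * u A := by
  have hMM : -M ≤ M := by linarith
  have i1 : IntervalIntegrable (cut u A f) volume a (-M) := cut_ii hm hA hf _ _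
  have i2 : IntervalIntegrable (cut u A f) volume (-M) M := cut_ii hm hA hf _ _
  have i3 : IntervalIntegrable (cut u A f) volume M b := cut_ii hm hA hf _ _
  rw [← integral_add_adjacent_intervals (i1.trans i2) i3,
    ← integral_add_adjacent_intervals i1 i2]
  have e1 : ∫ r in a..(-M), cut u A f r = (-M - a) * u A := by
    rw [integral_of_le ha, setIntegral_congr_fun measurableSet_Ioc
      (fun r hr => cut_low hfM hr.2)]
    simp [Real.volume_Ioc, ENNReal.toReal_ofReal (by linarith : (0:ℝ) ≤ -M - a), smul_eq_mul, ha]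
  have e3 : ∫ r in M..b, cut u A f r = 0 := by
    rw [integral_of_le hb, setIntegral_congr_fun measurableSet_Ioc
      (fun r hr => cut_high h0 hfM hr.1)]
    simp
  rw [e1, e3]; ring



lemma int_Ioi {M : ℝ} (φ : ℝ → ℝ) (hφ : IntegrableOn φ (Ioc 0 M)) (hM : 0 ≤ M)
    (h0 : ∀ r, M < r → φ r = 0) : ∫ r in Ioi (0:ℝ), φ r = ∫ r in (0:ℝ)..M, φ r := by
  have hs : Ioi (0:ℝ) = Ioc 0 M ∪ Ioi M := (Set.Ioc_union_Ioi_eq_Ioi hM).symm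
  have hz : ∫ r in Ioi M, φ r = 0 := by
    rw [setIntegral_congr_fun measurableSet_Ioi (fun r hr => h0 r hr)]
    simp
  have hint2 : IntegrableOn φ (Ioi M) := by
    apply (integrableOn_congr_fun (fun r hr => h0 r hr) measurableSet_Ioi).mpr
    exact integrableOn_zero
  rw [hs, setIntegral_union (Set.Ioc_disjoint_Ioi le_rfl) measurableSet_Ioi hφ hint2, hz,
    add_zero, integral_of_le hM]

lemma int_Iio {M : ℝ} (ψ : ℝ → ℝ) (hψ : IntegrableOn ψ (Ioc (-M) 0)) (hM : 0 < M)
    (h0 : ∀ r, r ≤ -M → ψ r = 0) : ∫ r in Iio (0:ℝ), ψ r = ∫ r in (-M)..(0:ℝ), ψ r := by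
  have hs : Iio (0:ℝ) = Iic (-M) ∪ Ioo (-M) 0 := (Set.Iic_union_Ioo_eq_Iio (by linarith)).symm
  have hz : ∫ r in Iic (-M), ψ r = 0 := by
    rw [setIntegral_congr_fun measurableSet_Iic (fun r hr => h0 r hr)]
    simp
  have hint2 : IntegrableOn ψ (Iic (-M)) := by
    apply (integrableOn_congr_fun (fun r hr => h0 r hr) measurableSet_Iic).mpr
    exact integrableOn_zero
  rw [hs, setIntegral_union ((Set.Iic_disjoint_Ioc le_rfl).mono_right Set.Ioo_subset_Ioc_self)
    measurableSet_Ioo hint2 (hψ.mono_set Ioo_subset_Ioc_self), hz, zero_add,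
    integral_of_le (by linarith : -M ≤ (0:ℝ)), integral_Ioc_eq_integral_Ioo]

lemma rep {u : Set X → ℝ} (hu : IsCapacity u) {f : X → ℝ} (hf : Measurable f) {M : ℝ}
    (hfM : ∀ x, |f x| ≤ M) (hM : 0 < M) :
    choquet u f = (∫ r in (-M)..M, cut u Set.univ f r) - M := by
  obtain ⟨h0, h1, hm⟩ := hu
  have hcut : (fun r => u {x | f x ≥ r}) = cut u Set.univ f := by
    funext r; simp [cut]
  have ii : ∀ a b : ℝ, IntervalIntegrable (cut u Set.univ f) volume a b :=
    cut_ii hm MeasurableSet.univ hf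
  unfold choquet
  rw [show (fun r => u {x | f x ≥ r} - 1) = (fun r => cut u Set.univ f r - 1) by
      funext r; rw [show u {x | f x ≥ r} = cut u Set.univ f r by simp [cut]]]
  rw [hcut]
  rw [int_Ioi (M := M) _ ((ii 0 M).1) hM.le (fun r hr => cut_high h0 hfM hr)]
  rw [int_Iio (M := M) (ψ := fun r => cut u Set.univ f r - 1)
      ((((ii (-M) 0).1).sub (integrableOn_const (by simp))) : _)
      (by linarith) (fun r hr => by show cut u Set.univ f r - 1 = 0; rw [cut_low hfM hr, h1]; ring)]
  rw [integral_sub (ii (-M) 0) intervalIntegrable_const, intervalIntegral.integral_const]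
  rw [add_comm (∫ r in (0:ℝ)..M, cut u Set.univ f r)]
  rw [show ∫ r in (-M)..(0:ℝ), cut u Set.univ f r = (∫ r in (-M)..M, cut u Set.univ f r) - ∫ r in (0:ℝ)..M, cut u Set.univ f r by
    rw [← integral_add_adjacent_intervals (ii (-M) 0) (ii 0 M)]; ring]
  simp [smul_eq_mul]
  ring

lemma chq_add_const {u : Set X → ℝ} (hu : IsCapacity u) {f : X → ℝ} (hf : Measurable f)
    {M : ℝ} (hfM : ∀ x, |f x| ≤ M) (hM : 0 < M) (c : ℝ) :
    choquet u (fun x => f x + c) = choquet u f + c := by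
  obtain ⟨h0, h1, hm⟩ := hu
  have hM' : 0 < M + |c| := by have := abs_nonneg c; linarith
  have hb : ∀ x, |f x + c| ≤ M + |c| := fun x => (abs_add_le _ _).trans (add_le_add (hfM x) le_rfl)
  rw [rep ⟨h0, h1, hm⟩ (hf.add_const c) hb hM', rep ⟨h0, h1, hm⟩ hf hfM hM]
  have hcc : ∀ r, cut u Set.univ (fun x => f x + c) r = cut u Set.univ f (r - c) := by
    intro r; unfold cut; congr 1; ext x
    simp only [Set.mem_inter_iff, Set.mem_univ, true_and, Set.mem_setOf_eq, ge_iff_le]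
    constructor <;> intro <;> linarith
  rw [integral_congr (fun r _ => hcc r),
    intervalIntegral.integral_comp_sub_right (fun r => cut u Set.univ f r) c,
    plateau h0 hm MeasurableSet.univ hf hfM hM.le
      (by have := abs_nonneg c; have := neg_abs_le c; linarith : -(M + |c|) - c ≤ -M)
      (by have := neg_abs_le c; have := le_abs_self c; linarith : M ≤ M + |c| - c), h1]
  have := le_abs_self c; have := neg_abs_le c
  ring

lemma chq_mono {u : Set X → ℝ} (hu : IsCapacity u) {f g : X → ℝ} (hf : Measurable f)
    (hg : Measurable g) {M : ℝ} (hfM : ∀ x, |f x| ≤ M) (hgM : ∀ x, |g x| ≤ M) (hM : 0 < M)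
    (hle : ∀ x, f x ≤ g x) : choquet u f ≤ choquet u g := by
  obtain ⟨h0, h1, hm⟩ := hu
  rw [rep ⟨h0, h1, hm⟩ hf hfM hM, rep ⟨h0, h1, hm⟩ hg hgM hM]
  have : (∫ r in (-M)..M, cut u Set.univ f r) ≤ ∫ r in (-M)..M, cut u Set.univ g r := by
    apply integral_mono_on (by linarith) (cut_ii hm MeasurableSet.univ hf _ _)
      (cut_ii hm MeasurableSet.univ hg _ _)
    intro r _
    exact hm _ _ (MeasurableSet.univ.inter (meas_lev hf r)) (MeasurableSet.univ.inter (meas_lev hg r))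
      (Set.inter_subset_inter_right _ (fun x hx => le_trans hx (hle x)))
  linarith

lemma chq_zero {u : Set X → ℝ} (hu : IsCapacity u) : choquet u (fun _ => (0:ℝ)) = 0 := by
  unfold choquet
  have e1 : Set.EqOn (fun r : ℝ => u {x : X | (0:ℝ) ≥ r}) (fun _ => (0:ℝ)) (Ioi 0) := by
    intro r hr
    show u {x : X | (0:ℝ) ≥ r} = 0
    rw [show {x : X | (0:ℝ) ≥ r} = ∅ from Set.eq_empty_iff_forall_notMem.2
      (fun x hx => absurd (show r ≤ 0 from hx) (not_le.2 (mem_Ioi.1 hr))), hu.1]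
  have e2 : Set.EqOn (fun r : ℝ => u {x : X | (0:ℝ) ≥ r} - 1) (fun _ => (0:ℝ)) (Iio 0) := by
    intro r hr
    show u {x : X | (0:ℝ) ≥ r} - 1 = 0
    rw [show {x : X | (0:ℝ) ≥ r} = Set.univ from Set.eq_univ_iff_forall.2
      (fun x => show (0:ℝ) ≥ r from le_of_lt hr), hu.2.1]
    ring
  rw [setIntegral_congr_fun measurableSet_Ioi e1, setIntegral_congr_fun measurableSet_Iio e2]
  simp

lemma chq_smul_pos {u : Set X → ℝ} (hu : IsCapacity u) {f : X → ℝ} (hf : Measurable f)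
    {M : ℝ} (hfM : ∀ x, |f x| ≤ M) (hM : 0 < M) {a : ℝ} (ha : 0 < a) :
    choquet u (fun x => a * f x) = a * choquet u f := by
  have hb : ∀ x, |a * f x| ≤ a * M := by
    intro x; rw [abs_mul, abs_of_pos ha]
    exact mul_le_mul_of_nonneg_left (hfM x) ha.le
  rw [rep hu (hf.const_mul a) hb (by positivity), rep hu hf hfM hM]
  have hcc : ∀ r, cut u Set.univ (fun x => a * f x) r = cut u Set.univ f (r / a) := by
    intro r; unfold cut; congr 1; ext x
    simp only [Set.mem_inter_iff, Set.mem_univ, true_and, Set.mem_setOf_eq, ge_iff_le]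
    rw [div_le_iff₀ ha, mul_comm]
  rw [integral_congr (fun r _ => hcc r),
    intervalIntegral.integral_comp_div (c := a) (f := fun r => cut u Set.univ f r) (ne_of_gt ha),
    show -(a * M) / a = -M by field_simp; try ring, show a * M / a = M by field_simp; try ring, smul_eq_mul]
  ring

lemma chq_add_ind {u : Set X → ℝ} (hu : IsCapacity u)
    (hadd : ∀ A B : Set X, MeasurableSet A → MeasurableSet B → Disjoint A B →
      u (A ∪ B) = u A + u B)
    {A : Set X} (hA : MeasurableSet A) {f : X → ℝ} (hf : Measurable f)
    {M : ℝ} (hfM : ∀ x, |f x| ≤ M) (hM : 0 < M) {c : ℝ} (hc : 0 ≤ c) :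
    choquet u (fun x => f x + A.indicator (fun _ => c) x) = choquet u f + c * u A := by
  obtain ⟨h0, h1, hm⟩ := hu
  set F := fun x => f x + A.indicator (fun _ => c) x with hFdef
  have hF : Measurable F := hf.add (measurable_const.indicator hA)
  have hFb : ∀ x, |F x| ≤ M + c := by
    intro x; have := hfM x
    simp only [hFdef]
    by_cases hx : x ∈ A
    · rw [Set.indicator_of_mem hx]
      exact (abs_add_le _ _).trans (by rw [abs_of_nonneg hc]; linarith)
    · rw [Set.indicator_of_notMem hx, add_zero]; linarith
  have hM' : 0 < M + c := by linarith
  have hfb' : ∀ x, |f x| ≤ M + c := fun x => (hfM x).trans (by linarith)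
  rw [rep ⟨h0, h1, hm⟩ hF hFb hM', rep ⟨h0, h1, hm⟩ hf hfb' hM']
  have key1 : ∀ r, cut u Set.univ F r = cut u A f (r - c) + cut u Aᶜ f r := by
    intro r; unfold cut
    rw [show Set.univ ∩ {x | F x ≥ r} = (A ∩ {x | f x ≥ r - c}) ∪ (Aᶜ ∩ {x | f x ≥ r}) from ?_]
    · exact hadd _ _ (hA.inter (meas_lev hf _)) (hA.compl.inter (meas_lev hf _))
        (Disjoint.mono Set.inter_subset_left Set.inter_subset_left disjoint_compl_right)
    · ext x
      simp only [Set.univ_inter, Set.mem_setOf_eq, Set.mem_union, Set.mem_inter_iff,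
        Set.mem_compl_iff, hFdef, ge_iff_le]
      by_cases hx : x ∈ A
      · rw [Set.indicator_of_mem hx]
        simp only [hx, not_true, false_and, or_false, true_and]
        constructor <;> intro <;> linarith
      · rw [Set.indicator_of_notMem hx, add_zero]
        simp only [hx, not_false_iff, false_and, false_or, true_and]
  have key2 : ∀ r, cut u Set.univ f r = cut u A f r + cut u Aᶜ f r := by
    intro r; unfold cut
    rw [show Set.univ ∩ {x | f x ≥ r} = (A ∩ {x | f x ≥ r}) ∪ (Aᶜ ∩ {x | f x ≥ r}) from ?_]
    · exact hadd _ _ (hA.inter (meas_lev hf _)) (hA.compl.inter (meas_lev hf _))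
        (Disjoint.mono Set.inter_subset_left Set.inter_subset_left disjoint_compl_right)
    · rw [Set.univ_inter, ← Set.union_inter_distrib_right, Set.union_compl_self, Set.univ_inter]
  have iAshift : IntervalIntegrable (fun r => cut u A f (r - c)) volume (-(M+c)) (M+c) := by
    apply Antitone.intervalIntegrable
    intro r s hrs
    exact cut_antitone hm hA hf (by linarith : r - c ≤ s - c)
  have iA : ∀ a b : ℝ, IntervalIntegrable (cut u A f) volume a b := cut_ii hm hA hf
  have iAc : ∀ a b : ℝ, IntervalIntegrable (cut u Aᶜ f) volume a b := cut_ii hm hA.compl hf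
  rw [integral_congr (fun r _ => key1 r), integral_congr (fun r _ => key2 r),
    integral_add iAshift (iAc _ _), integral_add (iA _ _) (iAc _ _),
    intervalIntegral.integral_comp_sub_right (fun r => cut u A f r) c,
    plateau h0 hm hA hf hfM hM.le (by linarith : -(M+c) - c ≤ -M) (by linarith : M ≤ M + c - c),
    plateau h0 hm hA hf hfM hM.le (by linarith : -(M+c) ≤ -M) (by linarith : M ≤ M + c)]
  ring

/-- staircase approximation -/
noncomputable def stair (g : X → ℝ) (n K : ℕ) (x : X) : ℝ :=
  ∑ k ∈ Finset.range K, ({y | g y ≥ ((k:ℝ)+1)/n}).indicator (fun _ => (1:ℝ)/n) x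

lemma stair_measurable {g : X → ℝ} (hg : Measurable g) (n K : ℕ) :
    Measurable (stair g n K) := by
  apply Finset.measurable_sum
  intro k _
  exact measurable_const.indicator (meas_lev hg _)

lemma stair_nonneg (g : X → ℝ) (n K : ℕ) (x : X) : 0 ≤ stair g n K x := by
  apply Finset.sum_nonneg
  intro k _
  exact Set.indicator_nonneg (fun _ _ => by positivity) x

lemma stair_le (g : X → ℝ) {n : ℕ} (hn : 0 < n) (K : ℕ) (x : X) :
    stair g n K x ≤ K := by
  calc stair g n K x ≤ ∑ k ∈ Finset.range K, (1:ℝ)/n := by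
        apply Finset.sum_le_sum
        intro k _
        exact Set.indicator_le_self' (fun _ _ => by positivity) x
    _ = K * ((1:ℝ)/n) := by rw [Finset.sum_const, Finset.card_range]; simp
    _ ≤ K * 1 := by
        apply mul_le_mul_of_nonneg_left _ (by positivity)
        rw [div_le_one (by exact_mod_cast hn)]
        exact_mod_cast hn
    _ = K := mul_one _

lemma stair_eq {g : X → ℝ} (hg0 : ∀ x, 0 ≤ g x) {n K : ℕ} (hn : 0 < n)
    (hK : ∀ x, g x * n < K) (x : X) :
    stair g n K x = (⌊(n:ℝ) * g x⌋₊ : ℝ) / n := by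
  classical
  set j := ⌊(n:ℝ) * g x⌋₊ with hj
  have hn' : (0:ℝ) < n := by exact_mod_cast hn
  have hjK : j ≤ K := by
    have h1 : (n:ℝ) * g x < K := by rw [mul_comm]; exact hK x
    have := Nat.floor_le (mul_nonneg (Nat.cast_nonneg n) (hg0 x))
    have : (j:ℝ) < K := lt_of_le_of_lt this h1
    exact_mod_cast this.le
  have hterm : ∀ k ∈ Finset.range K,
      ({y | g y ≥ ((k:ℝ)+1)/n}).indicator (fun _ => (1:ℝ)/n) x
        = if k < j then (1:ℝ)/n else 0 := by
    intro k _
    rw [Set.indicator_apply]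
    congr 1
    simp only [Set.mem_setOf_eq, ge_iff_le, eq_iff_iff]
    rw [div_le_iff₀ hn']
    constructor
    · intro h
      have : (k+1 : ℕ) ≤ j := Nat.le_floor (by push_cast; linarith [h])
      omega
    · intro h
      have h2 : (k+1 : ℕ) ≤ j := by omega
      have := (Nat.le_floor_iff (mul_nonneg (Nat.cast_nonneg n) (hg0 x))).1 h2
      push_cast at this
      linarith
  unfold stair
  rw [Finset.sum_congr rfl hterm, ← Finset.sum_filter,
    show (Finset.range K).filter (fun k => k < j) = Finset.range j by
      ext k; simp only [Finset.mem_filter, Finset.mem_range]; omega,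
    Finset.sum_const, Finset.card_range]
  simp [div_eq_mul_inv]

lemma stair_bounds {g : X → ℝ} (hg0 : ∀ x, 0 ≤ g x) {n K : ℕ} (hn : 0 < n)
    (hK : ∀ x, g x * n < K) (x : X) :
    g x - 1/n ≤ stair g n K x ∧ stair g n K x ≤ g x := by
  rw [stair_eq hg0 hn hK x]
  have hn' : (0:ℝ) < n := by exact_mod_cast hn
  have h1 : (⌊(n:ℝ) * g x⌋₊ : ℝ) ≤ (n:ℝ) * g x :=
    Nat.floor_le (mul_nonneg (Nat.cast_nonneg n) (hg0 x))
  have h2 : (n:ℝ) * g x < (⌊(n:ℝ) * g x⌋₊ : ℝ) + 1 := Nat.lt_floor_add_one _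
  constructor
  · rw [sub_le_iff_le_add, ← add_div, le_div_iff₀ hn']
    nlinarith
  · rw [div_le_iff₀ hn']
    nlinarith

lemma chq_add_stair {u : Set X → ℝ} (hu : IsCapacity u)
    (hadd : ∀ A B : Set X, MeasurableSet A → MeasurableSet B → Disjoint A B →
      u (A ∪ B) = u A + u B)
    {g : X → ℝ} (hg : Measurable g) {f : X → ℝ} (hf : Measurable f)
    {M : ℝ} (hfM : ∀ x, |f x| ≤ M) (hM : 0 < M) {n : ℕ} (hn : 0 < n) (K : ℕ) :
    choquet u (fun x => f x + stair g n K x)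
      = choquet u f + ∑ k ∈ Finset.range K, (1:ℝ)/n * u {y | g y ≥ ((k:ℝ)+1)/n} := by
  induction K with
  | zero =>
      rw [show (fun x => f x + stair g n 0 x) = f by
        funext x; simp [stair]]
      simp
  | succ m ih =>
      have hfm : Measurable (fun x => f x + stair g n m x) :=
        hf.add (stair_measurable hg n m)
      have hfmb : ∀ x, |f x + stair g n m x| ≤ M + m := by
        intro x
        have h1 := hfM x
        have h2 := stair_nonneg g n m x
        have h3 := stair_le g hn m x
        rw [abs_le] at h1 ⊢
        constructor <;> [linarith [h1.1]; linarith [h1.2]]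
      have hMm : (0:ℝ) < M + m := by positivity
      have step := chq_add_ind ⟨hu.1, hu.2.1, hu.2.2⟩ hadd
        (meas_lev hg (((m:ℝ)+1)/n)) hfm hfmb hMm
        (by positivity : (0:ℝ) ≤ (1:ℝ)/n)
      rw [show (fun x => f x + stair g n (m+1) x)
            = (fun x => (f x + stair g n m x)
                + ({y | g y ≥ ((m:ℝ)+1)/n}).indicator (fun _ => (1:ℝ)/n) x) by
          funext x; simp only [stair, Finset.sum_range_succ]; push_cast; ring,
        step, ih, Finset.sum_range_succ]
      push_cast
      ring

lemma chq_add_nonneg {u : Set X → ℝ} (hu : IsCapacity u)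
    (hadd : ∀ A B : Set X, MeasurableSet A → MeasurableSet B → Disjoint A B →
      u (A ∪ B) = u A + u B)
    {f g : X → ℝ} (hf : Measurable f) (hg : Measurable g)
    {M : ℝ} (hfM : ∀ x, |f x| ≤ M) (hgM : ∀ x, |g x| ≤ M) (hM : 0 < M)
    (hg0 : ∀ x, 0 ≤ g x) :
    choquet u (fun x => f x + g x) = choquet u f + choquet u g := by
  set D := choquet u (fun x => f x + g x) - choquet u f - choquet u g with hD
  have key : ∀ n : ℕ, 0 < n → |D| ≤ 2/n := by
    intro n hn
    have hn' : (0:ℝ) < n := by exact_mod_cast hn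
    have hn1 : (1:ℝ)/n ≤ 1 := by
      rw [div_le_one hn']; exact_mod_cast hn
    have hn0 : (0:ℝ) < 1/n := by positivity
    set K := ⌊M * n⌋₊ + 1 with hKdef
    have hK : ∀ x, g x * n < K := by
      intro x
      have h1 : g x ≤ M := le_of_abs_le (hgM x)
      have h2 : M * n < (⌊M * n⌋₊ : ℝ) + 1 := Nat.lt_floor_add_one _
      have h3 : g x * n ≤ M * n := mul_le_mul_of_nonneg_right h1 hn'.le
      push_cast [hKdef]
      linarith
    set st := stair g n K with hst
    have hstb := fun x => stair_bounds hg0 hn hK x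
    have hstm : Measurable st := stair_measurable hg n K
    set S := ∑ k ∈ Finset.range K, (1:ℝ)/n * u {y | g y ≥ ((k:ℝ)+1)/n} with hS
    have h1 : choquet u (fun x => f x + st x) = choquet u f + S :=
      chq_add_stair hu hadd hg hf hfM hM hn K
    have h2 : choquet u st = S := by
      have h := chq_add_stair hu hadd hg (f := fun _ => (0:ℝ)) measurable_const
        (M := M) (fun x => by simpa using hM.le) hM hn K
      rw [show (fun x => (0:ℝ) + st x) = st from funext (fun x => by rw [zero_add]),
        chq_zero hu] at h
      linarith [h]
    set B := 2*M + 3 with hB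
    have hBpos : (0:ℝ) < B := by rw [hB]; linarith
    have hstM : ∀ x, |st x| ≤ M := by
      intro x
      rw [abs_le]
      have u1 := (hstb x).2
      have u2 := stair_nonneg g n K x
      have u3 := le_of_abs_le (hgM x)
      exact ⟨by linarith, by linarith⟩
    have hstB : ∀ x, |st x| ≤ B := fun x => (hstM x).trans (by rw [hB]; linarith)
    have hgB : ∀ x, |g x| ≤ B := fun x => (hgM x).trans (by rw [hB]; linarith)
    have hfgb : ∀ x, |f x + g x| ≤ B := by
      intro x
      have u1 := abs_le.1 (hfM x); have u2 := abs_le.1 (hgM x)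
      rw [abs_le, hB]; exact ⟨by linarith [u1.1, u2.1], by linarith [u1.2, u2.2]⟩
    have hfstb : ∀ x, |f x + st x| ≤ B := by
      intro x
      have u1 := abs_le.1 (hfM x); have u2 := abs_le.1 (hstM x)
      rw [abs_le, hB]; exact ⟨by linarith [u1.1, u2.1], by linarith [u1.2, u2.2]⟩
    have hfstb2 : ∀ x, |(f x + st x) + 1/n| ≤ B := by
      intro x
      have u1 := abs_le.1 (hfM x); have u2 := abs_le.1 (hstM x)
      rw [abs_le, hB]
      exact ⟨by linarith [u1.1, u2.1], by linarith [u1.2, u2.2]⟩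
    have hstb2 : ∀ x, |st x + 1/n| ≤ B := by
      intro x
      have u2 := abs_le.1 (hstM x)
      rw [abs_le, hB]
      exact ⟨by linarith [u2.1], by linarith [u2.2]⟩
    have m1 : choquet u (fun x => f x + g x) ≤ choquet u (fun x => (f x + st x) + 1/n) :=
      chq_mono hu (hf.add hg) ((hf.add hstm).add_const _) hfgb hfstb2 hBpos
        (fun x => by have := (hstb x).1; linarith)
    have m2 : choquet u (fun x => f x + st x) ≤ choquet u (fun x => f x + g x) :=
      chq_mono hu (hf.add hstm) (hf.add hg) hfstb hfgb hBpos
        (fun x => by have := (hstb x).2; linarith)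
    have m3 : choquet u g ≤ choquet u (fun x => st x + 1/n) :=
      chq_mono hu hg (hstm.add_const _) hgB hstb2 hBpos
        (fun x => by have := (hstb x).1; linarith)
    have m4 : choquet u st ≤ choquet u g :=
      chq_mono hu hstm hg hstB hgB hBpos (fun x => (hstb x).2)
    have t1 : choquet u (fun x => (f x + st x) + 1/n)
        = choquet u (fun x => f x + st x) + 1/n :=
      chq_add_const hu (hf.add hstm) hfstb hBpos (1/n)
    have t2 : choquet u (fun x => st x + 1/n) = choquet u st + 1/n :=
      chq_add_const hu hstm hstB hBpos (1/n)
    rw [t1, h1] at m1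
    rw [h1] at m2
    rw [t2, h2] at m3
    rw [h2] at m4
    have h12 : (1:ℝ)/n ≤ 2/n := by
      have : (2:ℝ)/n = 1/n + 1/n := by ring
      linarith
    rw [abs_le, hD]
    exact ⟨by linarith, by linarith⟩
  by_contra hne
  have habs : 0 < |D| := by
    rw [abs_pos, hD]
    intro h; exact hne (by linarith)
  obtain ⟨n, hngt⟩ := exists_nat_gt (2/|D|)
  have hn' : (0:ℝ) < n := lt_trans (div_pos two_pos habs) hngt
  have hn : 0 < n := by exact_mod_cast hn'
  have hkey := key n hn
  have h2' : 2 < (n:ℝ) * |D| := (div_lt_iff₀ habs).1 hngt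
  have hcon : 2/(n:ℝ) < |D| := (div_lt_iff₀ hn').2 (by rw [mul_comm] at h2'; exact h2')
  linarith

lemma chq_add {u : Set X → ℝ} (hu : IsCapacity u)
    (hadd : ∀ A B : Set X, MeasurableSet A → MeasurableSet B → Disjoint A B →
      u (A ∪ B) = u A + u B)
    {f g : X → ℝ} (hf : Measurable f) (hg : Measurable g)
    {Mf Mg : ℝ} (hfM : ∀ x, |f x| ≤ Mf) (hgM : ∀ x, |g x| ≤ Mg)
    (hMf : 0 < Mf) (hMg : 0 < Mg) :
    choquet u (fun x => f x + g x) = choquet u f + choquet u g := by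
  have hMB : (0:ℝ) < Mf + 2*Mg := by linarith
  have hf'M : ∀ x, |f x + -Mg| ≤ Mf + 2*Mg := by
    intro x
    have h := abs_le.1 (hfM x)
    rw [abs_le]; exact ⟨by linarith [h.1], by linarith [h.2]⟩
  have hg'M : ∀ x, |g x + Mg| ≤ Mf + 2*Mg := by
    intro x
    have h := abs_le.1 (hgM x)
    rw [abs_le]; exact ⟨by linarith [h.1], by linarith [h.2]⟩
  have hg'0 : ∀ x, 0 ≤ g x + Mg := by
    intro x
    have h := abs_le.1 (hgM x)
    linarith [h.1]
  have hsum := chq_add_nonneg hu hadd (f := fun x => f x + -Mg) (g := fun x => g x + Mg)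
    (hf.add_const _) (hg.add_const _) hf'M hg'M hMB hg'0
  have t1 := chq_add_const hu hf hfM hMf (-Mg)
  have t2 := chq_add_const hu hg hgM hMg Mg
  rw [show (fun x => f x + g x) = (fun x => (f x + -Mg) + (g x + Mg)) by funext x; ring,
    hsum, t1, t2]
  ring

lemma chq_smul {u : Set X → ℝ} (hu : IsCapacity u)
    (hadd : ∀ A B : Set X, MeasurableSet A → MeasurableSet B → Disjoint A B →
      u (A ∪ B) = u A + u B)
    {f : X → ℝ} (hf : Measurable f) {M : ℝ} (hfM : ∀ x, |f x| ≤ M) (hM : 0 < M) (a : ℝ) :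
    choquet u (fun x => a * f x) = a * choquet u f := by
  rcases lt_trichotomy a 0 with hneg | hzero | hpos
  · have hb : ∀ x, |(-a) * f x| ≤ (-a) * M := by
      intro x; rw [abs_mul, abs_of_pos (by linarith : (0:ℝ) < -a)]
      exact mul_le_mul_of_nonneg_left (hfM x) (by linarith)
    have hb' : ∀ x, |a * f x| ≤ (-a) * M := by
      intro x; rw [abs_mul, abs_of_neg hneg]
      exact mul_le_mul_of_nonneg_left (hfM x) (by linarith)
    have hpos' : (0:ℝ) < (-a) * M := by nlinarith
    have hzero : choquet u (fun x => a * f x) + choquet u (fun x => (-a) * f x) = 0 := by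
      rw [← chq_add hu hadd (f := fun x => a * f x) (g := fun x => (-a) * f x) ((measurable_const).mul hf) ((measurable_const).mul hf)
        hb' hb hpos' hpos',
        show (fun x => a * f x + (-a) * f x) = (fun _ : X => (0:ℝ)) by funext x; ring,
        chq_zero hu]
    have hval : choquet u (fun x => (-a) * f x) = (-a) * choquet u f :=
      chq_smul_pos hu hf hfM hM (by linarith)
    rw [hval] at hzero
    linarith
  · rw [hzero,
      show (fun x => (0:ℝ) * f x) = (fun _ : X => (0:ℝ)) by funext x; ring,
      chq_zero hu]
    ring
  · exact chq_smul_pos hu hf hfM hM hpos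

end ChoquetAux

/-- If the capacity `u` is additive, the Choquet integral with respect to `u` is linear. -/
theorem choquet_linear_of_additive {X : Type*} [MeasurableSpace X] (u : Set X → ℝ)
    (hu : IsCapacity u)
    (hadd : ∀ A B : Set X, MeasurableSet A → MeasurableSet B → Disjoint A B →
      u (A ∪ B) = u A + u B) :
    ∀ (a b : ℝ) (f g : X → ℝ), Measurable f → Measurable g →
      (∃ M, ∀ x, |f x| ≤ M) → (∃ M, ∀ x, |g x| ≤ M) →
      choquet u (fun x => a * f x + b * g x) = a * choquet u f + b * choquet u g := by
  intro a b f g hf hg ⟨Mf0, hMf0⟩ ⟨Mg0, hMg0⟩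
  have hMf : ∀ x, |f x| ≤ |Mf0| + 1 := fun x => (hMf0 x).trans (by
    have := le_abs_self Mf0; linarith)
  have hMg : ∀ x, |g x| ≤ |Mg0| + 1 := fun x => (hMg0 x).trans (by
    have := le_abs_self Mg0; linarith)
  have hMfpos : (0:ℝ) < |Mf0| + 1 := by positivity
  have hMgpos : (0:ℝ) < |Mg0| + 1 := by positivity
  have haf : ∀ x, |a * f x| ≤ (|a| + 1) * (|Mf0| + 1) := by
    intro x; rw [abs_mul]
    apply mul_le_mul (by linarith [le_refl |a|]) (hMf x) (abs_nonneg _) (by positivity)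
  have hbg : ∀ x, |b * g x| ≤ (|b| + 1) * (|Mg0| + 1) := by
    intro x; rw [abs_mul]
    apply mul_le_mul (by linarith [le_refl |b|]) (hMg x) (abs_nonneg _) (by positivity)
  have hafp : (0:ℝ) < (|a| + 1) * (|Mf0| + 1) := by positivity
  have hbgp : (0:ℝ) < (|b| + 1) * (|Mg0| + 1) := by positivity
  rw [ChoquetAux.chq_add hu hadd (f := fun x => a * f x) (g := fun x => b * g x)
      (measurable_const.mul hf) (measurable_const.mul hg) haf hbg hafp hbgp,
    ChoquetAux.chq_smul hu hadd hf hMf hMfpos a,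
    ChoquetAux.chq_smul hu hadd hg hMg hMgpos b]
end

section
/- Let X be a measurable space, U a nonempty set of capacities on X equipped with the σ-algebra Σ_U, and f : X → ℝ a bounded measurable function. Then the map ξ(f) : U → ℝ given by ξ(f)(u) := I^u(f) is Σ_U-measurable, and it is bounded: for every real M, if |f(x)| ≤ M for all x ∈ X, then |I^u(f)| ≤ M for all u ∈ U. -/
open MeasureTheory Set



/-- The σ-algebra `Σ_U` on a set `U` of capacities, generated by the evaluation maps
`u ↦ u(A)` for measurable `A`. -/
def capSigma {X : Type*} [MeasurableSpace X] (U : Set (Set X → ℝ)) :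
    MeasurableSpace ↥U :=
  MeasurableSpace.generateFrom
    {S | ∃ (A : Set X) (Z : Set ℝ), MeasurableSet A ∧ MeasurableSet Z ∧
      S = {u : ↥U | u.1 A ∈ Z}}


/-- Integrability of a `[0,1]`-valued antitone function vanishing past `M` on `Ioi 0`. -/
lemma choquetAux_integrableOn {φ : ℝ → ℝ} (hφ : Antitone φ) (h0 : ∀ r, 0 ≤ φ r)
    (h1 : ∀ r, φ r ≤ 1) {M : ℝ} (hvan : ∀ r, M < r → φ r = 0) :
    IntegrableOn φ (Set.Ioi 0) := by
  have hind : Integrable ((Set.Ioc (0:ℝ) M).indicator (fun _ => (1:ℝ))) := by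
    rw [integrable_indicator_iff measurableSet_Ioc]
    exact integrableOn_const measure_Ioc_lt_top.ne
  refine Integrable.mono' hind.restrict hφ.measurable.aestronglyMeasurable ?_
  filter_upwards [ae_restrict_mem measurableSet_Ioi] with r hr
  by_cases hrM : r ≤ M
  · have hmem : r ∈ Set.Ioc (0:ℝ) M := ⟨hr, hrM⟩
    rw [Set.indicator_of_mem hmem, Real.norm_eq_abs, abs_le]
    exact ⟨by linarith [h0 r], h1 r⟩
  · rw [Set.indicator_of_notMem (fun h => hrM h.2), hvan r (not_le.mp hrM)]
    simp

/-- Riemann sum approximation of the integral of an antitone `[0,1]`-valued function. -/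
lemma choquetAux_sum_approx {φ : ℝ → ℝ} (hφ : Antitone φ) (h0 : ∀ r, 0 ≤ φ r)
    (h1 : ∀ r, φ r ≤ 1) {M : ℝ} (hvan : ∀ r, M < r → φ r = 0) {K : ℕ} (hK : M < K)
    (n : ℕ) :
    ∑ k ∈ Finset.range ((n+1) * K), ((n:ℝ)+1)⁻¹ * φ (((k:ℝ)+1)/((n:ℝ)+1))
      ≤ ∫ r in Set.Ioi (0:ℝ), φ r ∧
    ∫ r in Set.Ioi (0:ℝ), φ r
      ≤ (∑ k ∈ Finset.range ((n+1) * K), ((n:ℝ)+1)⁻¹ * φ (((k:ℝ)+1)/((n:ℝ)+1))) + ((n:ℝ)+1)⁻¹ := by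
  have hInt : IntegrableOn φ (Set.Ioi 0) := choquetAux_integrableOn hφ h0 h1 hvan
  set m : ℝ := (n:ℝ) + 1 with hm
  have hm0 : (0:ℝ) < m := by positivity
  set N : ℕ := (n+1) * K with hN
  set a : ℕ → ℝ := fun k => (k:ℝ) / m with ha
  have hcast : ∀ k : ℕ, ((k:ℝ)+1)/m = a (k+1) := by
    intro k; simp only [ha]; push_cast; ring
  simp_rw [hcast]
  have haN : a N = (K:ℝ) := by
    simp only [ha, hN, hm]
    push_cast
    field_simp
  have ha0 : a 0 = 0 := by simp [ha]
  have hamono : ∀ k : ℕ, a k ≤ a (k+1) := by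
    intro k
    simp only [ha]
    gcongr
    omega
  have hstep : ∀ k : ℕ, a (k+1) - a k = m⁻¹ := by
    intro k; simp only [ha]; push_cast; field_simp; ring
  have hsub : ∀ k : ℕ, Set.Ioc (a k) (a (k+1)) ⊆ Set.Ioi 0 := by
    intro k r hr
    have : (0:ℝ) ≤ a k := by positivity
    exact lt_of_le_of_lt this hr.1
  have hik : ∀ k : ℕ, IntervalIntegrable φ volume (a k) (a (k+1)) := by
    intro k
    rw [intervalIntegrable_iff, Set.uIoc_of_le (hamono k)]
    exact hInt.mono_set (hsub k)
  have hsplit : ∫ r in Set.Ioi (0:ℝ), φ r = ∫ r in Set.Ioc (0:ℝ) (K:ℝ), φ r := by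
    have hu : Set.Ioc (0:ℝ) (K:ℝ) ∪ Set.Ioi (K:ℝ) = Set.Ioi 0 :=
      Set.Ioc_union_Ioi_eq_Ioi (by positivity)
    have hz : ∫ r in Set.Ioi (K:ℝ), φ r = 0 := by
      rw [setIntegral_congr_fun measurableSet_Ioi (g := fun _ => (0:ℝ))]
      · simp
      · intro r hr
        exact hvan r (lt_of_lt_of_le hK (le_of_lt hr))
    rw [← hu, setIntegral_union (Set.Ioc_disjoint_Ioi le_rfl) measurableSet_Ioi
      (hInt.mono_set (hu ▸ Set.subset_union_left)) (hInt.mono_set (hu ▸ Set.subset_union_right)),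
      hz, add_zero]
  have hsum : ∑ k ∈ Finset.range N, ∫ r in a k..a (k+1), φ r = ∫ r in Set.Ioc (0:ℝ) (K:ℝ), φ r := by
    rw [intervalIntegral.sum_integral_adjacent_intervals (fun k _ => hik k)]
    rw [ha0, haN, intervalIntegral.integral_of_le (by positivity)]
  have hlow : ∀ k : ℕ, m⁻¹ * φ (a (k+1)) ≤ ∫ r in a k..a (k+1), φ r := by
    intro k
    have := intervalIntegral.integral_mono_on (hamono k)
      (intervalIntegrable_const (c := φ (a (k+1)))) (hik k)
      (fun x hx => hφ hx.2)
    rwa [intervalIntegral.integral_const, smul_eq_mul, hstep k] at this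
  have hhigh : ∀ k : ℕ, (∫ r in a k..a (k+1), φ r) ≤ m⁻¹ * φ (a k) := by
    intro k
    have := intervalIntegral.integral_mono_on (hamono k) (hik k)
      (intervalIntegrable_const (c := φ (a k)))
      (fun x hx => hφ hx.1)
    rwa [intervalIntegral.integral_const, smul_eq_mul, hstep k] at this
  constructor
  · calc ∑ k ∈ Finset.range N, m⁻¹ * φ (a (k+1))
        ≤ ∑ k ∈ Finset.range N, ∫ r in a k..a (k+1), φ r :=
          Finset.sum_le_sum (fun k _ => hlow k)
      _ = ∫ r in Set.Ioi (0:ℝ), φ r := by rw [hsum, hsplit]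
  · have htel : ∑ k ∈ Finset.range N, m⁻¹ * φ (a k)
        = (∑ k ∈ Finset.range N, m⁻¹ * φ (a (k+1))) + m⁻¹ * (φ (a 0) - φ (a N)) := by
      have h2 : ∑ k ∈ Finset.range N, (m⁻¹ * φ (a k) - m⁻¹ * φ (a (k+1)))
          = m⁻¹ * φ (a 0) - m⁻¹ * φ (a N) :=
        Finset.sum_range_sub' (fun k => m⁻¹ * φ (a k)) N
      rw [Finset.sum_sub_distrib] at h2
      have := mul_sub (m⁻¹) (φ (a 0)) (φ (a N))
      linarith
    have hbd : m⁻¹ * (φ (a 0) - φ (a N)) ≤ m⁻¹ := by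
      have h1' : φ (a 0) - φ (a N) ≤ 1 := by
        have := h1 (a 0); have := h0 (a N); linarith
      calc m⁻¹ * (φ (a 0) - φ (a N)) ≤ m⁻¹ * 1 :=
            mul_le_mul_of_nonneg_left h1' (by positivity)
        _ = m⁻¹ := mul_one _
    calc ∫ r in Set.Ioi (0:ℝ), φ r
        = ∑ k ∈ Finset.range N, ∫ r in a k..a (k+1), φ r := by rw [hsum, hsplit]
      _ ≤ ∑ k ∈ Finset.range N, m⁻¹ * φ (a k) := Finset.sum_le_sum (fun k _ => hhigh k)
      _ ≤ (∑ k ∈ Finset.range N, m⁻¹ * φ (a (k+1))) + m⁻¹ := by rw [htel]; linarith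

/-- The integral of a family of antitone functions, measurable in the parameter, is measurable. -/
lemma choquetAux_measurable {α : Type*} [m : MeasurableSpace α]
    (φ : α → ℝ → ℝ) (hmono : ∀ a, Antitone (φ a)) (h0 : ∀ a r, 0 ≤ φ a r)
    (h1 : ∀ a r, φ a r ≤ 1) {M : ℝ} (hvan : ∀ a r, M < r → φ a r = 0)
    (hmeas : ∀ r, Measurable (fun a => φ a r)) :
    Measurable (fun a => ∫ r in Set.Ioi (0:ℝ), φ a r) := by
  set K : ℕ := ⌈M⌉₊ + 1 with hKdef
  have hK : M < (K:ℝ) := by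
    have := Nat.le_ceil M
    have h2 : ((⌈M⌉₊:ℝ)) < ((K:ℝ)) := by exact_mod_cast Nat.lt_succ_self _
    linarith
  set S : ℕ → α → ℝ := fun n a =>
    ∑ k ∈ Finset.range ((n+1) * K), ((n:ℝ)+1)⁻¹ * φ a (((k:ℝ)+1)/((n:ℝ)+1)) with hS
  have hSmeas : ∀ n, Measurable (S n) := by
    intro n
    apply Finset.measurable_sum
    intro k _
    exact (hmeas _).const_mul _
  apply measurable_of_tendsto_metrizable hSmeas
  rw [tendsto_pi_nhds]
  intro a
  have h := fun n => choquetAux_sum_approx (hmono a) (h0 a) (h1 a) (hvan a) hK n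
  have hinv : Filter.Tendsto (fun n : ℕ => ((n:ℝ)+1)⁻¹) Filter.atTop (nhds 0) := by
    have := tendsto_one_div_add_atTop_nhds_zero_nat (𝕜 := ℝ)
    simpa [one_div] using this
  refine tendsto_of_tendsto_of_tendsto_of_le_of_le
    (g := fun n : ℕ => (∫ r in Set.Ioi (0:ℝ), φ a r) - ((n:ℝ)+1)⁻¹)
    (h := fun _ : ℕ => ∫ r in Set.Ioi (0:ℝ), φ a r) ?_ tendsto_const_nhds ?_ ?_
  · simpa using tendsto_const_nhds.sub hinv
  · intro n
    have := (h n).2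
    simp only [hS]
    linarith
  · intro n
    exact (h n).1

/-- Bounds on the integral of an antitone `[0,1]`-valued function vanishing past `M`. -/
lemma choquetAux_bounds {φ : ℝ → ℝ} (hφ : Antitone φ) (h0 : ∀ r, 0 ≤ φ r)
    (h1 : ∀ r, φ r ≤ 1) {M : ℝ} (hM : 0 ≤ M) (hvan : ∀ r, M < r → φ r = 0) :
    0 ≤ ∫ r in Set.Ioi (0:ℝ), φ r ∧ (∫ r in Set.Ioi (0:ℝ), φ r) ≤ M := by
  have hInt : IntegrableOn φ (Set.Ioi 0) := choquetAux_integrableOn hφ h0 h1 hvan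
  constructor
  · exact setIntegral_nonneg measurableSet_Ioi (fun r _ => h0 r)
  · have hu : Set.Ioc (0:ℝ) M ∪ Set.Ioi M = Set.Ioi 0 := Set.Ioc_union_Ioi_eq_Ioi hM
    have hz : ∫ r in Set.Ioi M, φ r = 0 := by
      rw [setIntegral_congr_fun measurableSet_Ioi (g := fun _ => (0:ℝ))]
      · simp
      · intro r hr
        exact hvan r hr
    have hsplit : ∫ r in Set.Ioi (0:ℝ), φ r = ∫ r in Set.Ioc (0:ℝ) M, φ r := by
      rw [← hu, setIntegral_union (Set.Ioc_disjoint_Ioi le_rfl) measurableSet_Ioi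
        (hInt.mono_set (hu ▸ Set.subset_union_left)) (hInt.mono_set (hu ▸ Set.subset_union_right)),
        hz, add_zero]
    rw [hsplit]
    calc ∫ r in Set.Ioc (0:ℝ) M, φ r ≤ ∫ _r in Set.Ioc (0:ℝ) M, (1:ℝ) := by
          apply setIntegral_mono_on (hInt.mono_set (hu ▸ Set.subset_union_left))
            (integrableOn_const measure_Ioc_lt_top.ne) measurableSet_Ioc
          intro r _
          exact h1 r
      _ = M := by
          rw [setIntegral_const, smul_eq_mul, mul_one, Real.volume_real_Ioc_of_le hM,
            sub_zero]

/-- For a bounded measurable `f`, the Choquet expectation map `ξ(f) : u ↦ I^u(f)` is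
`Σ_U`-measurable and bounded (by any bound of `f`). -/

theorem choquet_expectation_measurable_bounded {X : Type*} [MeasurableSpace X]
    (U : Set (Set X → ℝ)) (hUne : U.Nonempty) (hcap : ∀ u ∈ U, IsCapacity u)
    (f : X → ℝ) (hf : Measurable f) (hbdd : ∃ M, ∀ x, |f x| ≤ M) :
    Measurable[capSigma U] (fun u : ↥U => choquet u.1 f) ∧
      ∀ M : ℝ, (∀ x, |f x| ≤ M) → ∀ u ∈ U, |choquet u f| ≤ M := by
  obtain ⟨M₀, hM₀⟩ := hbdd
  obtain ⟨u₀, hu₀⟩ := hUne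
  -- `X` is nonempty
  have hXne : Nonempty X := by
    by_contra h
    rw [not_nonempty_iff] at h
    have h1 := (hcap u₀ hu₀).1
    have h2 := (hcap u₀ hu₀).2.1
    rw [Set.univ_eq_empty_iff.mpr h] at h2
    linarith [h1, h2]
  -- basic facts about the level sets
  have hset_meas : ∀ r : ℝ, MeasurableSet {x | f x ≥ r} := fun r => hf measurableSet_Ici
  have hset_mono : ∀ r s : ℝ, r ≤ s → {x | f x ≥ s} ⊆ {x | f x ≥ r} :=
    fun r s hrs x hx => le_trans hrs hx
  -- basic facts about capacities
  have hval : ∀ u ∈ U, ∀ A : Set X, MeasurableSet A → 0 ≤ u A ∧ u A ≤ 1 := by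
    intro u hu A hA
    obtain ⟨he, hun, hmono⟩ := hcap u hu
    constructor
    · rw [← he]; exact hmono ∅ A MeasurableSet.empty hA (Set.empty_subset A)
    · rw [← hun]; exact hmono A Set.univ hA MeasurableSet.univ (Set.subset_univ A)
  -- rewriting the Choquet integral as a difference of integrals over `Ioi 0`
  have heq : ∀ u : Set X → ℝ, choquet u f
      = (∫ r in Set.Ioi (0:ℝ), u {x | f x ≥ r})
        - ∫ r in Set.Ioi (0:ℝ), (1 - u {x | f x ≥ -r}) := by
    intro u
    have h1 : ∫ r in Set.Ioi (0:ℝ), (u {x | f x ≥ -r} - 1)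
        = ∫ r in Set.Iio (0:ℝ), (u {x | f x ≥ r} - 1) := by
      have := integral_comp_neg_Ioi (0:ℝ) (fun r => u {x | f x ≥ r} - 1)
      rw [neg_zero] at this
      rw [this, integral_Iic_eq_integral_Iio]
    have h2 : ∫ r in Set.Ioi (0:ℝ), (1 - u {x | f x ≥ -r})
        = - ∫ r in Set.Ioi (0:ℝ), (u {x | f x ≥ -r} - 1) := by
      rw [← integral_neg]
      congr 1
      funext r
      ring
    rw [choquet, h2, h1]
    ring
  -- hypotheses for the two families
  have hφ₁ : ∀ a : ↥U, Antitone (fun r => a.1 {x | f x ≥ r}) := by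
    intro a r s hrs
    exact (hcap a.1 a.2).2.2 _ _ (hset_meas s) (hset_meas r) (hset_mono r s hrs)
  have hφ₂ : ∀ a : ↥U, Antitone (fun r => 1 - a.1 {x | f x ≥ -r}) := by
    intro a r s hrs
    have := (hcap a.1 a.2).2.2 _ _ (hset_meas (-r)) (hset_meas (-s))
      (hset_mono (-s) (-r) (neg_le_neg hrs))
    simp only
    linarith
  have hvan₁ : ∀ u ∈ U, ∀ M : ℝ, (∀ x, |f x| ≤ M) →
      ∀ r : ℝ, M < r → u {x | f x ≥ r} = 0 := by
    intro u hu M hM r hr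
    have : {x | f x ≥ r} = ∅ := by
      ext x
      simp only [Set.mem_setOf_eq, Set.mem_empty_iff_false, iff_false, not_le, ge_iff_le]
      have := hM x
      have := abs_le.mp (hM x)
      linarith [this.2]
    rw [this]
    exact (hcap u hu).1
  have hvan₂ : ∀ u ∈ U, ∀ M : ℝ, (∀ x, |f x| ≤ M) →
      ∀ r : ℝ, M < r → 1 - u {x | f x ≥ -r} = 0 := by
    intro u hu M hM r hr
    have : {x | f x ≥ -r} = Set.univ := by
      ext x
      simp only [Set.mem_setOf_eq, Set.mem_univ, iff_true, ge_iff_le]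
      have := abs_le.mp (hM x)
      linarith [this.1]
    rw [this, (hcap u hu).2.1]
    ring
  constructor
  · -- measurability
    have hev : ∀ A : Set X, MeasurableSet A →
        Measurable[capSigma U] (fun u : ↥U => u.1 A) := by
      intro A hA Z hZ
      exact MeasurableSpace.measurableSet_generateFrom ⟨A, Z, hA, hZ, rfl⟩
    have hm₁ : Measurable[capSigma U]
        (fun a : ↥U => ∫ r in Set.Ioi (0:ℝ), a.1 {x | f x ≥ r}) := by
      refine choquetAux_measurable (m := capSigma U) _ hφ₁
        (fun a r => (hval a.1 a.2 _ (hset_meas r)).1)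
        (fun a r => (hval a.1 a.2 _ (hset_meas r)).2)
        (M := M₀) (fun a r hr => hvan₁ a.1 a.2 M₀ hM₀ r hr)
        (fun r => hev _ (hset_meas r))
    have hm₂ : Measurable[capSigma U]
        (fun a : ↥U => ∫ r in Set.Ioi (0:ℝ), (1 - a.1 {x | f x ≥ -r})) := by
      refine choquetAux_measurable (m := capSigma U) _ hφ₂
        (fun a r => by
          have := (hval a.1 a.2 _ (hset_meas (-r))).2
          linarith)
        (fun a r => by
          have := (hval a.1 a.2 _ (hset_meas (-r))).1
          linarith)
        (M := M₀) (fun a r hr => hvan₂ a.1 a.2 M₀ hM₀ r hr)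
        (fun r => (hev _ (hset_meas (-r))).const_sub 1)
    have : (fun u : ↥U => choquet u.1 f)
        = fun a : ↥U => (∫ r in Set.Ioi (0:ℝ), a.1 {x | f x ≥ r})
          - ∫ r in Set.Ioi (0:ℝ), (1 - a.1 {x | f x ≥ -r}) := funext fun a => heq a.1
    rw [this]
    exact hm₁.sub hm₂
  · -- boundedness
    intro M hM u hu
    have hM0 : 0 ≤ M := le_trans (abs_nonneg _) (hM hXne.some)
    have hb₁ := choquetAux_bounds (hφ₁ ⟨u, hu⟩)
      (fun r => (hval u hu _ (hset_meas r)).1)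
      (fun r => (hval u hu _ (hset_meas r)).2)
      hM0 (fun r hr => hvan₁ u hu M hM r hr)
    have hb₂ := choquetAux_bounds (hφ₂ ⟨u, hu⟩)
      (fun r => by
        have := (hval u hu _ (hset_meas (-r))).2
        simp only
        linarith)
      (fun r => by
        have := (hval u hu _ (hset_meas (-r))).1
        simp only
        linarith)
      hM0 (fun r hr => hvan₂ u hu M hM r hr)
    rw [heq u, abs_le]
    constructor
    · linarith [hb₁.1, hb₂.2]
    · linarith [hb₁.2, hb₂.1]
end

section
/- On the three-point measurable space X = {0, 1, 2} with the powerset σ-algebra, define f := 11·𝟙_{{0}} + 1·𝟙_{{1}} and g := 11·𝟙_{{0}} + 10·𝟙_{{1}}, and define the additive capacities u₁(A) := (1/3)·|A| and u₂(A) := (1/2)·𝟙_A(0) + (1/8)·𝟙_A(1) + (3/8)·𝟙_A(2). Then f and g are comonotonic, and (I^{u₁}(f) − I^{u₂}(f))·(I^{u₁}(g) − I^{u₂}(g)) = −13/32; in particular the map u ↦ I^u(·) does not preserve comonotonicity. -/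
open MeasureTheory

/-- The act `f = 11·𝟙_{{0}} + 1·𝟙_{{1}}` on the three-point space. -/
noncomputable def fEll : Fin 3 → ℝ := fun x => if x = 0 then 11 else if x = 1 then 1 else 0

/-- The act `g = 11·𝟙_{{0}} + 10·𝟙_{{1}}` on the three-point space. -/
noncomputable def gEll : Fin 3 → ℝ := fun x => if x = 0 then 11 else if x = 1 then 10 else 0

/-- The uniform additive capacity `u₁(A) = |A|/3`. -/
noncomputable def uEll1 : Set (Fin 3) → ℝ := fun A => (A.ncard : ℝ) / 3

open Classical in
/-- The additive capacity `u₂ = (1/2)·δ₀ + (1/8)·δ₁ + (3/8)·δ₂`. -/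
noncomputable def uEll2 : Set (Fin 3) → ℝ := fun A =>
  (if (0 : Fin 3) ∈ A then (1 / 2 : ℝ) else 0) +
    (if (1 : Fin 3) ∈ A then (1 / 8 : ℝ) else 0) +
    (if (2 : Fin 3) ∈ A then (3 / 8 : ℝ) else 0)

lemma step_integral (h : ℝ → ℝ) (a b c₁ c₂ : ℝ) (ha : 0 < a) (hab : a < b)
    (h1 : ∀ r ∈ Set.Ioc (0:ℝ) a, h r = c₁) (h2 : ∀ r ∈ Set.Ioc a b, h r = c₂)
    (h3 : ∀ r, b < r → h r = 0) :
    ∫ r in Set.Ioi (0:ℝ), h r = a * c₁ + (b - a) * c₂ := by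
  have heq : Set.EqOn h
      (fun r => (Set.Ioc (0:ℝ) a).indicator (fun _ => c₁) r +
        (Set.Ioc a b).indicator (fun _ => c₂) r) (Set.Ioi 0) := by
    intro r hr
    simp only [Set.mem_Ioi] at hr
    show h r = _ + _
    by_cases hra : r ≤ a
    · rw [Set.indicator_of_mem (show r ∈ Set.Ioc 0 a from ⟨hr, hra⟩),
        Set.indicator_of_notMem (fun hm => absurd hm.1 (not_lt.mpr hra))]
      rw [h1 r ⟨hr, hra⟩]; ring
    · push_neg at hra
      by_cases hrb : r ≤ b
      · rw [Set.indicator_of_notMem (fun hm => absurd hm.2 (not_le.mpr hra)),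
          Set.indicator_of_mem (show r ∈ Set.Ioc a b from ⟨hra, hrb⟩)]
        rw [h2 r ⟨hra, hrb⟩]; ring
      · push_neg at hrb
        rw [Set.indicator_of_notMem (fun hm => absurd hm.2 (not_le.mpr hra)),
          Set.indicator_of_notMem (fun hm => absurd hm.2 (not_le.mpr hrb))]
        rw [h3 r hrb]; ring
  rw [setIntegral_congr_fun measurableSet_Ioi heq]
  have j1 : Integrable ((Set.Ioc (0:ℝ) a).indicator (fun _ => c₁)) volume := by
    have : IntegrableOn (fun _ => c₁) (Set.Ioc (0:ℝ) a) volume :=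
      (integrableOn_const_iff (C := c₁)).mpr (Or.inr measure_Ioc_lt_top)
    exact this.integrable_indicator measurableSet_Ioc
  have j2 : Integrable ((Set.Ioc a b).indicator (fun _ => c₂)) volume := by
    have : IntegrableOn (fun _ => c₂) (Set.Ioc a b) volume :=
      (integrableOn_const_iff (C := c₂)).mpr (Or.inr measure_Ioc_lt_top)
    exact this.integrable_indicator measurableSet_Ioc
  rw [integral_add (j1.integrableOn) (j2.integrableOn),
    setIntegral_indicator measurableSet_Ioc, setIntegral_indicator measurableSet_Ioc]
  have e1 : Set.Ioi (0:ℝ) ∩ Set.Ioc 0 a = Set.Ioc 0 a :=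
    Set.inter_eq_self_of_subset_right (fun r hr => hr.1)
  have e2 : Set.Ioi (0:ℝ) ∩ Set.Ioc a b = Set.Ioc a b :=
    Set.inter_eq_self_of_subset_right (fun r hr => lt_trans ha hr.1)
  rw [e1, e2, setIntegral_const, setIntegral_const, Real.volume_real_Ioc_of_le (by linarith),
    Real.volume_real_Ioc_of_le (by linarith)]
  simp only [smul_eq_mul]; ring

lemma neg_part (u : Set (Fin 3) → ℝ) (f : Fin 3 → ℝ) (hf : ∀ x, 0 ≤ f x)
    (hu : u Set.univ = 1) :
    ∫ r in Set.Iio (0:ℝ), (u {x | f x ≥ r} - 1) = 0 := by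
  have : Set.EqOn (fun r => u {x | f x ≥ r} - 1) (fun _ => (0:ℝ)) (Set.Iio 0) := by
    intro r hr
    simp only [Set.mem_Iio] at hr
    have hs : {x | f x ≥ r} = Set.univ :=
      Set.eq_univ_of_forall (fun x => le_trans hr.le (hf x))
    show u {x | f x ≥ r} - 1 = 0
    rw [hs, hu, sub_self]
  rw [setIntegral_congr_fun measurableSet_Iio this, integral_zero]

-- set identities
lemma fset1 : ∀ r ∈ Set.Ioc (0:ℝ) 1, {x : Fin 3 | fEll x ≥ r} = {0, 1} := by
  intro r ⟨h1, h2⟩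
  ext x
  fin_cases x <;>
    simp [fEll, Set.mem_insert_iff, Fin.ext_iff, -Fin.val_eq_zero_iff] <;> first | linarith | (intro; linarith)

lemma fset2 : ∀ r ∈ Set.Ioc (1:ℝ) 11, {x : Fin 3 | fEll x ≥ r} = {0} := by
  intro r ⟨h1, h2⟩
  ext x
  fin_cases x <;>
    simp [fEll, Fin.ext_iff, -Fin.val_eq_zero_iff] <;> first | linarith | (intro; linarith)

lemma fset3 : ∀ r : ℝ, 11 < r → {x : Fin 3 | fEll x ≥ r} = ∅ := by
  intro r h
  ext x
  fin_cases x <;> simp [fEll] <;> linarith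

lemma gset1 : ∀ r ∈ Set.Ioc (0:ℝ) 10, {x : Fin 3 | gEll x ≥ r} = {0, 1} := by
  intro r ⟨h1, h2⟩
  ext x
  fin_cases x <;>
    simp [gEll, Set.mem_insert_iff, Fin.ext_iff, -Fin.val_eq_zero_iff] <;> first | linarith | (intro; linarith)

lemma gset2 : ∀ r ∈ Set.Ioc (10:ℝ) 11, {x : Fin 3 | gEll x ≥ r} = {0} := by
  intro r ⟨h1, h2⟩
  ext x
  fin_cases x <;>
    simp [gEll, Fin.ext_iff, -Fin.val_eq_zero_iff] <;> first | linarith | (intro; linarith)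

lemma gset3 : ∀ r : ℝ, 11 < r → {x : Fin 3 | gEll x ≥ r} = ∅ := by
  intro r h
  ext x
  fin_cases x <;> simp [gEll] <;> linarith

-- capacity values
lemma u1_pair : uEll1 {0, 1} = 2 / 3 := by
  unfold uEll1
  rw [Set.ncard_pair (by decide : (0 : Fin 3) ≠ 1)]
  norm_num

lemma u1_single : uEll1 {0} = 1 / 3 := by
  unfold uEll1; rw [Set.ncard_singleton]; norm_num

lemma u1_empty : uEll1 ∅ = 0 := by
  unfold uEll1; simp

lemma u1_univ : uEll1 Set.univ = 1 := by
  unfold uEll1; rw [Set.ncard_univ]; simp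

lemma u2_pair : uEll2 ({0, 1} : Set (Fin 3)) = 5 / 8 := by
  unfold uEll2; norm_num [Fin.ext_iff]

lemma u2_single : uEll2 ({0} : Set (Fin 3)) = 1 / 2 := by
  unfold uEll2; norm_num [Fin.ext_iff]

lemma u2_empty : uEll2 (∅ : Set (Fin 3)) = 0 := by
  unfold uEll2; norm_num [Fin.ext_iff]

lemma u2_univ : uEll2 (Set.univ : Set (Fin 3)) = 1 := by
  unfold uEll2; norm_num [Fin.ext_iff]

lemma f_nonneg : ∀ x, 0 ≤ fEll x := by
  intro x; fin_cases x <;> norm_num [fEll, Fin.ext_iff]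

lemma g_nonneg : ∀ x, 0 ≤ gEll x := by
  intro x; fin_cases x <;> norm_num [gEll, Fin.ext_iff]

lemma choquet_u1_f : choquet uEll1 fEll = 4 := by
  unfold choquet
  rw [neg_part _ _ f_nonneg u1_univ,
    step_integral _ 1 11 (2/3) (1/3) one_pos (by norm_num)
      (fun r hr => by rw [fset1 r hr, u1_pair])
      (fun r hr => by rw [fset2 r hr, u1_single])
      (fun r hr => by rw [fset3 r hr, u1_empty])]
  norm_num

lemma choquet_u2_f : choquet uEll2 fEll = 45 / 8 := by
  unfold choquet
  rw [neg_part _ _ f_nonneg u2_univ,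
    step_integral _ 1 11 (5/8) (1/2) one_pos (by norm_num)
      (fun r hr => by rw [fset1 r hr, u2_pair])
      (fun r hr => by rw [fset2 r hr, u2_single])
      (fun r hr => by rw [fset3 r hr, u2_empty])]
  norm_num

lemma choquet_u1_g : choquet uEll1 gEll = 7 := by
  unfold choquet
  rw [neg_part _ _ g_nonneg u1_univ,
    step_integral _ 10 11 (2/3) (1/3) (by norm_num) (by norm_num)
      (fun r hr => by rw [gset1 r hr, u1_pair])
      (fun r hr => by rw [gset2 r hr, u1_single])
      (fun r hr => by rw [gset3 r hr, u1_empty])]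
  norm_num

lemma choquet_u2_g : choquet uEll2 gEll = 27 / 4 := by
  unfold choquet
  rw [neg_part _ _ g_nonneg u2_univ,
    step_integral _ 10 11 (5/8) (1/2) (by norm_num) (by norm_num)
      (fun r hr => by rw [gset1 r hr, u2_pair])
      (fun r hr => by rw [gset2 r hr, u2_single])
      (fun r hr => by rw [gset3 r hr, u2_empty])]
  norm_num

/-- `f` and `g` are comonotonic, yet
`(I^{u₁}(f) − I^{u₂}(f))·(I^{u₁}(g) − I^{u₂}(g)) = −13/32`; in particular the Choquet
expectations `ξ(f), ξ(g)` on `{u₁, u₂}` are not comonotonic. -/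
theorem choquet_expectation_not_comonotonic :
    Comonotonic fEll gEll ∧
    (choquet uEll1 fEll - choquet uEll2 fEll) *
      (choquet uEll1 gEll - choquet uEll2 gEll) = -13 / 32 ∧
    ¬ Comonotonic (fun u : ↥({uEll1, uEll2} : Set (Set (Fin 3) → ℝ)) => choquet u.1 fEll)
        (fun u : ↥({uEll1, uEll2} : Set (Set (Fin 3) → ℝ)) => choquet u.1 gEll) := by
  refine ⟨?_, ?_, ?_⟩
  · intro x y
    fin_cases x <;> fin_cases y <;> norm_num [fEll, gEll, Fin.ext_iff]
  · rw [choquet_u1_f, choquet_u2_f, choquet_u1_g, choquet_u2_g]; norm_num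
  · intro hcom
    have := hcom ⟨uEll1, Or.inl rfl⟩ ⟨uEll2, Or.inr rfl⟩
    simp only at this
    rw [choquet_u1_f, choquet_u2_f, choquet_u1_g, choquet_u2_g] at this
    norm_num at this
end

section
/- Let X, Y be measurable spaces, let C_X and C_Y be the sets of all capacities on X and on Y, each equipped with its σ-algebra Σ_{C_X}, Σ_{C_Y}, and let h : X → Y be a measurable map. Then for every u ∈ C_X the pushforward u ∘ h⁻¹, defined by (u ∘ h⁻¹)(B) := u(h⁻¹(B)), is a capacity on Y, and the map L(h) : C_X → C_Y, u ↦ u ∘ h⁻¹, is measurable from (C_X, Σ_{C_X}) to (C_Y, Σ_{C_Y}). -/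
open MeasureTheory

/-- For a measurable `h : X → Y`, the pushforward `u ∘ h⁻¹` of a capacity is a capacity,
and the induced lift-up map `L(h) : C_X → C_Y` between the spaces of all capacities is
measurable with respect to the σ-algebras `Σ_{C_X}`, `Σ_{C_Y}`. -/
theorem pushforward_capacity_and_liftup_measurable {X Y : Type*}
    [MeasurableSpace X] [MeasurableSpace Y] (h : X → Y) (hh : Measurable h)
    (L : ↥{u : Set X → ℝ | IsCapacity u} → ↥{v : Set Y → ℝ | IsCapacity v})
    (hL : ∀ (u : ↥{u : Set X → ℝ | IsCapacity u}) (B : Set Y),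
      (L u).1 B = u.1 (h ⁻¹' B)) :
    (∀ u : Set X → ℝ, IsCapacity u → IsCapacity (fun B : Set Y => u (h ⁻¹' B))) ∧
    @Measurable ↥{u : Set X → ℝ | IsCapacity u} ↥{v : Set Y → ℝ | IsCapacity v}
      (capSigma {u : Set X → ℝ | IsCapacity u})
      (capSigma {v : Set Y → ℝ | IsCapacity v}) L := by
  constructor
  · intro u hu
    obtain ⟨h0, h1, hmono⟩ := hu
    refine ⟨by simpa using h0, by simpa using h1, ?_⟩
    intro A B hA hB hAB
    exact hmono _ _ (hh hA) (hh hB) (Set.preimage_mono hAB)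
  · refine @measurable_generateFrom _ _ (capSigma _) _ L ?_
    rintro S ⟨B, Z, hB, hZ, rfl⟩
    refine MeasurableSpace.measurableSet_generateFrom ⟨h ⁻¹' B, Z, hh hB, hZ, ?_⟩
    ext u
    simp [hL u B]
end

section
/- For every natural number N ≥ 1 and every real number α > 1, the inequality Σ_{k=0}^{2N} (k/(2N))^α · C(2N, k) < 2^{2N−1} holds, where C(2N, k) is the binomial coefficient. (Consequently, in the Ellsberg single-urn model with distortion exponent α > 1 and a symmetric binomial second-order prior over the 2N+1 admissible capacities, the value of betting on the known-probability event strictly exceeds the value of betting on the unknown-probability event.) -/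
lemma sum_mul_choose (n : ℕ) :
    ∑ k ∈ Finset.range (n + 2), k * (n + 1).choose k = (n + 1) * 2 ^ n := by
  rw [Finset.sum_range_succ']
  simp only [Nat.mul_zero, Nat.add_zero, Nat.zero_mul, Nat.add_zero]
  have : ∀ k, (k + 1) * (n + 1).choose (k + 1) = (n + 1) * n.choose k := by
    intro k
    rw [mul_comm, ← Nat.add_one_mul_choose_eq]
  calc ∑ k ∈ Finset.range (n + 1), (k + 1) * (n + 1).choose (k + 1) + 0
      = ∑ k ∈ Finset.range (n + 1), (n + 1) * n.choose k := by
        rw [add_zero]; exact Finset.sum_congr rfl fun k _ => this k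
    _ = (n + 1) * 2 ^ n := by rw [← Finset.mul_sum, Nat.sum_range_choose]

/-- For `N ≥ 1` and real `α > 1`, one has
`Σ_{k=0}^{2N} (k/(2N))^α · C(2N,k) < 2^(2N−1)`.
(This inequality yields the strict preference `V₂(f₁) > V₂(f₂)` in the Ellsberg
single-urn model with a symmetric binomial second-order prior.) -/
theorem ellsberg_binomial_prior_sum_lt (N : ℕ) (hN : 1 ≤ N) (α : ℝ) (hα : 1 < α) :
    ∑ k ∈ Finset.range (2 * N + 1), ((k : ℝ) / (2 * N : ℕ)) ^ α * (Nat.choose (2 * N) k : ℝ) <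
      2 ^ (2 * N - 1) := by
  have hn : (0:ℝ) < (2 * N : ℕ) := by positivity
  -- step 1: termwise bound
  have key : ∑ k ∈ Finset.range (2 * N + 1), ((k : ℝ) / (2 * N : ℕ)) ^ α * (Nat.choose (2 * N) k : ℝ)
      < ∑ k ∈ Finset.range (2 * N + 1), ((k : ℝ) / (2 * N : ℕ)) * (Nat.choose (2 * N) k : ℝ) := by
    apply Finset.sum_lt_sum
    · intro k hk
      rcases Nat.eq_zero_or_pos k with rfl | hkpos
      · simp [Real.zero_rpow (by linarith : α ≠ 0)]
      · have hx0 : (0:ℝ) < (k : ℝ) / (2 * N : ℕ) := by positivity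
        have hx1 : (k : ℝ) / (2 * N : ℕ) ≤ 1 := by
          rw [div_le_one hn]
          exact_mod_cast Nat.lt_succ_iff.mp (Finset.mem_range.mp hk)
        have := Real.rpow_le_rpow_of_exponent_ge hx0 hx1 (le_of_lt hα)
        rw [Real.rpow_one] at this
        exact mul_le_mul_of_nonneg_right this (by positivity)
    · refine ⟨N, Finset.mem_range.mpr (by omega), ?_⟩
      have hx0 : (0:ℝ) < (N : ℝ) / (2 * N : ℕ) := by positivity
      have hx1 : (N : ℝ) / (2 * N : ℕ) < 1 := by
        rw [div_lt_one hn]; push_cast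
        have h1 : (1:ℝ) ≤ N := by exact_mod_cast hN
        nlinarith
      have := Real.rpow_lt_rpow_of_exponent_gt hx0 hx1 hα
      rw [Real.rpow_one] at this
      have hc : (0:ℝ) < (Nat.choose (2 * N) N : ℝ) := by
        exact_mod_cast Nat.choose_pos (by omega)
      exact mul_lt_mul_of_pos_right this hc
  -- step 2: exact value of the linear sum
  have hid : ∑ k ∈ Finset.range (2 * N + 1), ((k : ℝ) / (2 * N : ℕ)) * (Nat.choose (2 * N) k : ℝ)
      = 2 ^ (2 * N - 1) := by
    obtain ⟨m, hm⟩ : ∃ m, 2 * N = m + 1 := ⟨2 * N - 1, by omega⟩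
    have hnat := sum_mul_choose m
    have : ∑ k ∈ Finset.range (2 * N + 1), (k : ℝ) * (Nat.choose (2 * N) k : ℝ)
        = ((2 * N) : ℕ) * 2 ^ (2 * N - 1) := by
      rw [hm]
      have : ((m + 1) * 2 ^ m : ℕ) = ((m+1:ℕ) : ℝ) * 2 ^ m := by push_cast; ring
      calc ∑ k ∈ Finset.range (m + 2), (k : ℝ) * (Nat.choose (m + 1) k : ℝ)
          = ((∑ k ∈ Finset.range (m + 2), k * (m + 1).choose k : ℕ) : ℝ) := by push_cast; ring
        _ = ((m+1:ℕ) : ℝ) * 2 ^ (m + 1 - 1) := by rw [hnat]; push_cast; ring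
    calc ∑ k ∈ Finset.range (2 * N + 1), ((k : ℝ) / (2 * N : ℕ)) * (Nat.choose (2 * N) k : ℝ)
        = (∑ k ∈ Finset.range (2 * N + 1), (k : ℝ) * (Nat.choose (2 * N) k : ℝ)) / (2 * N : ℕ) := by
          rw [Finset.sum_div]; exact Finset.sum_congr rfl fun k _ => by ring
      _ = 2 ^ (2 * N - 1) := by rw [this]; field_simp
  linarith
end
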